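/- The equal opportunity control is continuous: for each finite product set X, the correspondence (μ, f) ↦ {d ∈ [0,1]^{I×X} : TP(w,d,μ,f) = TP(b,d,μ,f)} on Δ°(I×X) × (0,1)^{I×X} is nonempty- and compact-valued, upper hemicontinuous, and lower hemicontinuous. Consequently, the equal opportunity control is not fragile. -/

import Mathlib

/-!
Formalization of the Coate–Loury statistical discrimination model with
machine-learning (contractible) beliefs, following Zhu,
"The Impact of Equal Opportunity on Statistical Discrimination".
-/

open scoped BigOperators
open MeasureTheory

noncomputable section

attribute [local instance] Classical.propDecidable

/-- Group identities `I = {w, b}`. -/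
inductive GrpI
  | w
  | b
deriving DecidableEq

instance : Fintype GrpI :=
  Fintype.ofList [GrpI.w, GrpI.b] (by intro x; cases x <;> simp)

/-- Classes `Y = {q, u}` (qualified / unqualified). -/
inductive Cls
  | q
  | u
deriving DecidableEq

instance : Fintype Cls :=
  Fintype.ofList [Cls.q, Cls.u] (by intro x; cases x <;> simp)

/-- A game `(X, λ_w, p, G, v_q, v_u, ω)` of the Coate–Loury model.  The set of
other features is the finite product `X = X_1 × ⋯ × X_N`, encoded as the pi type
`(j : Fin N) → Xs j`.  The statistical model (Assumption 1) is encoded through a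
nonempty subset `Ysub ⊆ {1, …, N}` together with the factorization
`p(x | i, y) = pY(x_𝒴 | y) · pC(x_{-𝒴} | i, x_𝒴)`.  The cost distribution is
given by an everywhere positive density `g` with `∫ g = 1` and `∫ |c| g(c) dc < ∞`. -/
structure Game (N : ℕ) (Xs : Fin N → Type) [∀ j, Fintype (Xs j)]
    [∀ j, Nonempty (Xs j)] where
  lamw : ℝ
  lamw_pos : 0 < lamw
  lamw_lt_one : lamw < 1
  Ysub : Finset (Fin N)
  Ysub_nonempty : Ysub.Nonempty
  pY : ((j : Ysub) → Xs j.1) → Cls → ℝ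
  pC : GrpI → ((j : Fin N) → Xs j) → ℝ
  pY_pos : ∀ xY y, 0 < pY xY y
  pC_pos : ∀ i x, 0 < pC i x
  pY_sum : ∀ y, ∑ xY, pY xY y = 1
  pC_sum : ∀ (i : GrpI) (xY : (j : Ysub) → Xs j.1),
    ∑ x ∈ Finset.univ.filter
        (fun x : (j : Fin N) → Xs j => (fun j : Ysub => x j.1) = xY),
      pC i x = 1
  g : ℝ → ℝ
  g_pos : ∀ c, 0 < g c
  g_int : Integrable g
  g_norm : (∫ c, g c) = 1
  g_abs_int : Integrable fun c => |c| * g c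
  vq : ℝ
  vu : ℝ
  om : ℝ
  vq_pos : 0 < vq
  vu_pos : 0 < vu
  om_pos : 0 < om

section Policies

variable {N : ℕ} {Xs : Fin N → Type}

/-- A decision policy `d : I × X → [0,1]`. -/
def IsPolicy (d : GrpI → ((j : Fin N) → Xs j) → ℝ) : Prop :=
  ∀ i x, d i x ∈ Set.Icc (0 : ℝ) 1

/-- A decision policy when data is color-blind, `d_cb : X → [0,1]`. -/
def IsCbPolicy (dcb : ((j : Fin N) → Xs j) → ℝ) : Prop :=
  ∀ x, dcb x ∈ Set.Icc (0 : ℝ) 1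

/-- `S ⊆ {1, …, N}` has the dependence property for the belief `f`:
`f` depends on `(i, x)` only up to `(i, x_S)`. -/
def DepProp {I : Type} (f : I → ((j : Fin N) → Xs j) → ℝ)
    (S : Finset (Fin N)) : Prop :=
  ∀ (i : I) (x x' : (j : Fin N) → Xs j), (∀ j ∈ S, x j = x' j) → f i x = f i x'

/-- The minimal subset `Ŷ(f)` with the dependence property. -/
def minDep {I : Type} (f : I → ((j : Fin N) → Xs j) → ℝ) : Finset (Fin N) :=
  Finset.univ.filter fun j => ∀ S : Finset (Fin N), DepProp f S → j ∈ S

variable [∀ j, Fintype (Xs j)]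

/-- Full-support probability distributions on `I × X` (the set `Δ°(I × X)`). -/
def FullSupp (μ : GrpI → ((j : Fin N) → Xs j) → ℝ) : Prop :=
  (∀ i x, 0 < μ i x) ∧ ∑ i, ∑ x, μ i x = 1

/-- Beliefs valued in `(0, 1)`. -/
def OpenBelief (f : GrpI → ((j : Fin N) → Xs j) → ℝ) : Prop :=
  ∀ i x, f i x ∈ Set.Ioo (0 : ℝ) 1

/-- Acceptance rate of group `i`. -/
def AR (i : GrpI) (d μ : GrpI → ((j : Fin N) → Xs j) → ℝ) : ℝ :=
  (∑ x, d i x * μ i x) / ∑ x, μ i x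

/-- True positive rate of group `i`. -/
def TP (i : GrpI) (d μ f : GrpI → ((j : Fin N) → Xs j) → ℝ) : ℝ :=
  (∑ x, d i x * μ i x * f i x) / ∑ x, μ i x * f i x

/-- The equal opportunity control `k(X, μ, f)`. -/
def EOset (μ f : GrpI → ((j : Fin N) → Xs j) → ℝ) :
    Set (GrpI → ((j : Fin N) → Xs j) → ℝ) :=
  {d | IsPolicy d ∧ TP GrpI.w d μ f = TP GrpI.b d μ f}

/-- The color-blind control: all color-blind decision policies. -/
def CBset : Set (GrpI → ((j : Fin N) → Xs j) → ℝ) :=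
  {d | IsPolicy d ∧ ∀ x, d GrpI.w x = d GrpI.b x}

/-- The no proxies control: policies depending on `(i,x)` only through `x_{Ŷ(f)}`. -/
def NoProxies (_μ f : GrpI → ((j : Fin N) → Xs j) → ℝ) :
    Set (GrpI → ((j : Fin N) → Xs j) → ℝ) :=
  {d | IsPolicy d ∧
    ∀ i i' x x', (∀ j ∈ minDep f, x j = x' j) → d i x = d i' x'}

/-- `ℓ²` distance between decision policies. -/
def polDist (d d' : GrpI → ((j : Fin N) → Xs j) → ℝ) : ℝ :=
  Real.sqrt (∑ i, ∑ x, (d i x - d' i x) ^ 2)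

/-- `ℓ²` distance between pairs `(μ, f)`. -/
def pairDist (μ f μ' f' : GrpI → ((j : Fin N) → Xs j) → ℝ) : ℝ :=
  Real.sqrt ((∑ i, ∑ x, (μ i x - μ' i x) ^ 2) + ∑ i, ∑ x, (f i x - f' i x) ^ 2)

/-- `ℓ²` distance between strategy profiles `(c̄, d)`. -/
def profDist (c : GrpI → ℝ) (d : GrpI → ((j : Fin N) → Xs j) → ℝ)
    (c' : GrpI → ℝ) (d' : GrpI → ((j : Fin N) → Xs j) → ℝ) : ℝ :=
  Real.sqrt ((∑ i, (c i - c' i) ^ 2) + ∑ i, ∑ x, (d i x - d' i x) ^ 2)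

end Policies

/-- Upper hemicontinuity of a correspondence on a set. -/
def UpperHemicontinuousOn' {α β : Type*} [TopologicalSpace α] [TopologicalSpace β]
    (F : α → Set β) (S : Set α) : Prop :=
  ∀ a ∈ S, ∀ V : Set β, IsOpen V → F a ⊆ V → ∀ᶠ a' in nhdsWithin a S, F a' ⊆ V

/-- Lower hemicontinuity of a correspondence on a set. -/
def LowerHemicontinuousOn' {α β : Type*} [TopologicalSpace α] [TopologicalSpace β]
    (F : α → Set β) (S : Set α) : Prop :=
  ∀ a ∈ S, ∀ V : Set β, IsOpen V → (F a ∩ V).Nonempty →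
    ∀ᶠ a' in nhdsWithin a S, (F a' ∩ V).Nonempty

namespace Game

variable {N : ℕ} {Xs : Fin N → Type} [∀ j, Fintype (Xs j)] [∀ j, Nonempty (Xs j)]
variable (Γ : Game N Xs)

/-- Projection `x ↦ x_𝒴`. -/
def proj (x : (j : Fin N) → Xs j) : (j : Γ.Ysub) → Xs j.1 := fun j => x j.1

/-- `p(x | i, y) = p(x_𝒴 | y) · p(x_{-𝒴} | i, x_𝒴)`. -/
def p (i : GrpI) (x : (j : Fin N) → Xs j) (y : Cls) : ℝ :=
  Γ.pY (Γ.proj x) y * Γ.pC i x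

/-- Group probabilities `λ_w`, `λ_b = 1 - λ_w`. -/
def lam : GrpI → ℝ := fun i =>
  match i with
  | GrpI.w => Γ.lamw
  | GrpI.b => 1 - Γ.lamw

/-- The CDF `G` of the cost distribution. -/
def G (c : ℝ) : ℝ := ∫ t in Set.Iic c, Γ.g t

/-- The likelihood function `l(x) = p(x_𝒴 | q) / p(x_𝒴 | u)`. -/
def lhd (x : (j : Fin N) → Xs j) : ℝ :=
  Γ.pY (Γ.proj x) Cls.q / Γ.pY (Γ.proj x) Cls.u

/-- The likelihood function on `X_𝒴`. -/
def lhdY (xY : (j : Γ.Ysub) → Xs j.1) : ℝ := Γ.pY xY Cls.q / Γ.pY xY Cls.u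

/-- The set of likelihood values `{l_1 < … < l_n}`. -/
def LVset : Set ℝ := Set.range Γ.lhd

/-- The assumption that `1` is not a likelihood value
(equivalently, `WW` is single-peaked). -/
def OneNotLV : Prop := (1 : ℝ) ∉ Γ.LVset

/-- The largest likelihood value `l_n`. -/
def lmax : ℝ := sSup Γ.LVset

/-- `⌈ℓ⌉`: the smallest likelihood value `≥ ℓ`. -/
def lceil (ℓ : ℝ) : ℝ := sInf {v | v ∈ Γ.LVset ∧ ℓ ≤ v}

/-- `⌈ℓ⌉⁻`: the next smallest likelihood value below `⌈ℓ⌉` (or `l_0 = 0`). -/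
def lceilm (ℓ : ℝ) : ℝ := sSup (insert 0 {v | v ∈ Γ.LVset ∧ v < Γ.lceil ℓ})

/-- The smallest likelihood value `> ℓ`. -/
def lnext (ℓ : ℝ) : ℝ := sInf {v | v ∈ Γ.LVset ∧ ℓ < v}

/-- The true distribution of features `μ_RE` given cost thresholds `c̄`. -/
def muRE (c : GrpI → ℝ) (i : GrpI) (x : (j : Fin N) → Xs j) : ℝ :=
  Γ.lam i * (Γ.G (c i) * Γ.p i x Cls.q + (1 - Γ.G (c i)) * Γ.p i x Cls.u)

/-- The true conditional probability (calibrated belief) `f_RE` given `c̄`. -/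
def fRE (c : GrpI → ℝ) (i : GrpI) (x : (j : Fin N) → Xs j) : ℝ :=
  Γ.G (c i) * Γ.p i x Cls.q /
    (Γ.G (c i) * Γ.p i x Cls.q + (1 - Γ.G (c i)) * Γ.p i x Cls.u)

/-- Utility `U_i(c̄(i), d(i))` of the representative `i`-applicant. -/
def Uapp (i : GrpI) (ci : ℝ) (di : ((j : Fin N) → Xs j) → ℝ) : ℝ :=
  Γ.om * ∑ x, (Γ.G ci * Γ.p i x Cls.q + (1 - Γ.G ci) * Γ.p i x Cls.u) * di x -
    ∫ t in Set.Iic ci, t * Γ.g t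

/-- Firm utility `U_F(d, μ, f)`. -/
def UF (d μ f : GrpI → ((j : Fin N) → Xs j) → ℝ) : ℝ :=
  ∑ i, ∑ x, d i x * μ i x * (f i x * Γ.vq - (1 - f i x) * Γ.vu)

/-- The color-blind true distribution of features `μ_cb,RE`. -/
def mucbRE (c : GrpI → ℝ) (x : (j : Fin N) → Xs j) : ℝ :=
  Γ.muRE c GrpI.w x + Γ.muRE c GrpI.b x

/-- The color-blind true conditional probability `f_cb,RE`. -/
def fcbRE (c : GrpI → ℝ) (x : (j : Fin N) → Xs j) : ℝ :=
  (Γ.muRE c GrpI.w x * Γ.fRE c GrpI.w x + Γ.muRE c GrpI.b x * Γ.fRE c GrpI.b x) /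
    Γ.mucbRE c x

/-- Firm utility when data is color-blind. -/
def UFcb (dcb μcb fcb : ((j : Fin N) → Xs j) → ℝ) : ℝ :=
  ∑ x, dcb x * μcb x * (fcb x * Γ.vq - (1 - fcb x) * Γ.vu)

/-- `d(i | l_m)`: conditional acceptance probability at likelihood value `lv`. -/
def dcond (i : GrpI) (di : ((j : Fin N) → Xs j) → ℝ) (lv : ℝ) : ℝ :=
  (∑ x ∈ Finset.univ.filter (fun x => Γ.lhd x = lv), Γ.p i x Cls.q * di x) /
    ∑ x ∈ Finset.univ.filter (fun x => Γ.lhd x = lv), Γ.p i x Cls.q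

/-- The within-group policy `d(i)` is associated with the likelihood mixture `ℓ`. -/
def AssociatedWith (i : GrpI) (di : ((j : Fin N) → Xs j) → ℝ) (ℓ : ℝ) : Prop :=
  0 ≤ ℓ ∧ ℓ ≤ Γ.lmax ∧
    ∀ lv ∈ Γ.LVset,
      (Γ.lceil ℓ < lv → Γ.dcond i di lv = 1) ∧
      (lv = Γ.lceil ℓ →
        Γ.dcond i di lv = (Γ.lceil ℓ - ℓ) / (Γ.lceil ℓ - Γ.lceilm ℓ)) ∧
      (lv < Γ.lceil ℓ → Γ.dcond i di lv = 0)

/-- A decision policy is fair if both within-group policies are associated with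
the same likelihood mixture. -/
def Fair (d : GrpI → ((j : Fin N) → Xs j) → ℝ) : Prop :=
  ∃ ℓ, Γ.AssociatedWith GrpI.w (d GrpI.w) ℓ ∧ Γ.AssociatedWith GrpI.b (d GrpI.b) ℓ

/-- `WW(l_m) = ω ∑_{x_𝒴 : l(x_𝒴) > l_m} (p(x_𝒴|q) - p(x_𝒴|u))`. -/
def WWval (t : ℝ) : ℝ :=
  Γ.om * ∑ xY ∈ Finset.univ.filter (fun xY => t < Γ.lhdY xY),
    (Γ.pY xY Cls.q - Γ.pY xY Cls.u)

/-- The piecewise-linear function `WW` interpolating the points `(l_m, WW(l_m))`. -/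
def WW (ℓ : ℝ) : ℝ :=
  if Γ.lceil ℓ = Γ.lceilm ℓ then Γ.WWval (Γ.lceil ℓ)
  else
    (Γ.WWval (Γ.lceilm ℓ) * (Γ.lceil ℓ - ℓ) +
        Γ.WWval (Γ.lceil ℓ) * (ℓ - Γ.lceilm ℓ)) /
      (Γ.lceil ℓ - Γ.lceilm ℓ)

/-- `EĒ(l_m)`: the unique cost with `G(EĒ(l_m)) = 1 / ((v_q/v_u) l_m + 1)`. -/
def EEbar (lv : ℝ) : ℝ := sInf {cc | 1 / (Γ.vq / Γ.vu * lv + 1) ≤ Γ.G cc}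

/-- The correspondence `EE : [0, l_n] ⇒ ℝ`. -/
def EE (ℓ : ℝ) : Set ℝ :=
  if ℓ = 0 then Set.Ici (Γ.EEbar (Γ.lceil 0))
  else if ℓ = Γ.lmax then Set.Iic (Γ.EEbar Γ.lmax)
  else if ℓ ∈ Γ.LVset then Set.Icc (Γ.EEbar (Γ.lnext ℓ)) (Γ.EEbar ℓ)
  else {Γ.EEbar (Γ.lceil ℓ)}

/-- Each representative applicant's cost threshold is a best response to `d`. -/
def BestResponds (c : GrpI → ℝ) (d : GrpI → ((j : Fin N) → Xs j) → ℝ) : Prop :=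
  ∀ (i : GrpI) (c' : ℝ), Γ.Uapp i c' (d i) ≤ Γ.Uapp i (c i) (d i)

/-- An (un-controlled) equilibrium. -/
def IsEquilibrium (c : GrpI → ℝ) (d : GrpI → ((j : Fin N) → Xs j) → ℝ) : Prop :=
  IsPolicy d ∧ Γ.BestResponds c d ∧
    ∀ d', IsPolicy d' →
      Γ.UF d' (Γ.muRE c) (Γ.fRE c) ≤ Γ.UF d (Γ.muRE c) (Γ.fRE c)

/-- A `k`-controlled equilibrium, for the control `(μ, f) ↦ K μ f`. -/
def IsControlledEq
    (K : (GrpI → ((j : Fin N) → Xs j) → ℝ) → (GrpI → ((j : Fin N) → Xs j) → ℝ) →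
      Set (GrpI → ((j : Fin N) → Xs j) → ℝ))
    (c : GrpI → ℝ) (d : GrpI → ((j : Fin N) → Xs j) → ℝ) : Prop :=
  d ∈ K (Γ.muRE c) (Γ.fRE c) ∧ Γ.BestResponds c d ∧
    ∀ d' ∈ K (Γ.muRE c) (Γ.fRE c),
      Γ.UF d' (Γ.muRE c) (Γ.fRE c) ≤ Γ.UF d (Γ.muRE c) (Γ.fRE c)

/-- `𝒮_k(μ, f)`: firm-optimal policies under the control `K` at `(μ, f)`. -/
def Smax
    (K : (GrpI → ((j : Fin N) → Xs j) → ℝ) → (GrpI → ((j : Fin N) → Xs j) → ℝ) →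
      Set (GrpI → ((j : Fin N) → Xs j) → ℝ))
    (μ f : GrpI → ((j : Fin N) → Xs j) → ℝ) :
    Set (GrpI → ((j : Fin N) → Xs j) → ℝ) :=
  {d | d ∈ K μ f ∧ ∀ d' ∈ K μ f, Γ.UF d' μ f ≤ Γ.UF d μ f}

/-- A `k`-controlled `ε`-equilibrium. -/
def IsCtrlEpsEq
    (K : (GrpI → ((j : Fin N) → Xs j) → ℝ) → (GrpI → ((j : Fin N) → Xs j) → ℝ) →
      Set (GrpI → ((j : Fin N) → Xs j) → ℝ))
    (ε : ℝ) (c : GrpI → ℝ) (d : GrpI → ((j : Fin N) → Xs j) → ℝ) : Prop :=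
  ∃ μ f, FullSupp μ ∧ OpenBelief f ∧
    pairDist μ f (Γ.muRE c) (Γ.fRE c) ≤ ε ∧
    Γ.BestResponds c d ∧ d ∈ K μ f ∧ ∀ d' ∈ K μ f, Γ.UF d' μ f ≤ Γ.UF d μ f

/-- Best responses of applicants to a color-blind policy. -/
def BestRespondsCb (c : GrpI → ℝ) (dcb : ((j : Fin N) → Xs j) → ℝ) : Prop :=
  ∀ (i : GrpI) (c' : ℝ), Γ.Uapp i c' dcb ≤ Γ.Uapp i (c i) dcb

/-- An equilibrium when data is color-blind (unrestricted control). -/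
def IsCbEquilibrium (c : GrpI → ℝ) (dcb : ((j : Fin N) → Xs j) → ℝ) : Prop :=
  IsCbPolicy dcb ∧ Γ.BestRespondsCb c dcb ∧
    ∀ dcb', IsCbPolicy dcb' →
      Γ.UFcb dcb' (Γ.mucbRE c) (Γ.fcbRE c) ≤ Γ.UFcb dcb (Γ.mucbRE c) (Γ.fcbRE c)

/-- A `k_cb`-controlled equilibrium when data is color-blind. -/
def IsCbControlledEq (K : Set (((j : Fin N) → Xs j) → ℝ)) (c : GrpI → ℝ)
    (dcb : ((j : Fin N) → Xs j) → ℝ) : Prop :=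
  dcb ∈ K ∧ Γ.BestRespondsCb c dcb ∧
    ∀ dcb' ∈ K,
      Γ.UFcb dcb' (Γ.mucbRE c) (Γ.fcbRE c) ≤ Γ.UFcb dcb (Γ.mucbRE c) (Γ.fcbRE c)

end Game

/-- A control when data is color-blind: for each `X` and each
`(μ_cb, f_cb) ∈ Δ°(X) × (0,1)^X` it specifies a nonempty compact set of
color-blind decision policies. -/
structure CbControl : Type 1 where
  sets : ∀ (N : ℕ) (Xs : Fin N → Type) [∀ j, Fintype (Xs j)] [∀ j, Nonempty (Xs j)],
    (((j : Fin N) → Xs j) → ℝ) → (((j : Fin N) → Xs j) → ℝ) →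
      Set (((j : Fin N) → Xs j) → ℝ)
  nonempty : ∀ (N : ℕ) (Xs : Fin N → Type) [∀ j, Fintype (Xs j)]
    [∀ j, Nonempty (Xs j)] (μ f : ((j : Fin N) → Xs j) → ℝ),
    (∀ x, 0 < μ x) → (∑ x, μ x = 1) → (∀ x, f x ∈ Set.Ioo (0 : ℝ) 1) →
    (sets N Xs μ f).Nonempty
  compact : ∀ (N : ℕ) (Xs : Fin N → Type) [∀ j, Fintype (Xs j)]
    [∀ j, Nonempty (Xs j)] (μ f : ((j : Fin N) → Xs j) → ℝ),
    (∀ x, 0 < μ x) → (∑ x, μ x = 1) → (∀ x, f x ∈ Set.Ioo (0 : ℝ) 1) →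
    IsCompact (sets N Xs μ f)
  mem_policy : ∀ (N : ℕ) (Xs : Fin N → Type) [∀ j, Fintype (Xs j)]
    [∀ j, Nonempty (Xs j)] (μ f : ((j : Fin N) → Xs j) → ℝ),
    (∀ x, 0 < μ x) → (∑ x, μ x = 1) → (∀ x, f x ∈ Set.Ioo (0 : ℝ) 1) →
    sets N Xs μ f ⊆ {dcb | IsCbPolicy dcb}

/-! ### Auxiliary development for the proof -/

namespace EOFrag

set_option linter.unusedSectionVars false

variable {N : ℕ} {Xs : Fin N → Type} [∀ j, Fintype (Xs j)] [∀ j, Nonempty (Xs j)]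

/-- The type of decision policies / distributions / beliefs. -/
abbrev Pl (N : ℕ) (Xs : Fin N → Type) : Type := GrpI → ((j : Fin N) → Xs j) → ℝ
/-- The type of pairs `(μ, f)`. -/
abbrev PT (N : ℕ) (Xs : Fin N → Type) : Type := Pl N Xs × Pl N Xs

/-- The domain `Δ°(I×X) × (0,1)^{I×X}`. -/
def SP : Set ((GrpI → ((j : Fin N) → Xs j) → ℝ) × (GrpI → ((j : Fin N) → Xs j) → ℝ)) :=
  {pf | FullSupp pf.1 ∧ OpenBelief pf.2}

/-- The set of all decision policies. -/
def PolSet : Set (GrpI → ((j : Fin N) → Xs j) → ℝ) := {d | IsPolicy d}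

lemma xt_nonempty : Nonempty ((j : Fin N) → Xs j) := ⟨fun _ => Classical.arbitrary _⟩

lemma den_pos {μ f : GrpI → ((j : Fin N) → Xs j) → ℝ} (hμ : FullSupp μ) (hf : OpenBelief f)
    (i : GrpI) : 0 < ∑ x, μ i x * f i x := by
  have : Nonempty ((j : Fin N) → Xs j) := xt_nonempty
  exact Finset.sum_pos (fun x _ => mul_pos (hμ.1 i x) (hf i x).1) Finset.univ_nonempty

lemma TP_nonneg {μ f d : GrpI → ((j : Fin N) → Xs j) → ℝ} (hμ : FullSupp μ) (hf : OpenBelief f)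
    (hd : IsPolicy d) (i : GrpI) : 0 ≤ TP i d μ f := by
  refine div_nonneg (Finset.sum_nonneg fun x _ => ?_) (den_pos hμ hf i).le
  exact mul_nonneg (mul_nonneg (hd i x).1 (hμ.1 i x).le) (hf i x).1.le

lemma one_mem_EOset {μ f : GrpI → ((j : Fin N) → Xs j) → ℝ} (hμ : FullSupp μ)
    (hf : OpenBelief f) : (fun _ _ => (1 : ℝ)) ∈ EOset μ f := by
  have h1 : ∀ i, TP i (fun _ _ => (1 : ℝ)) μ f = 1 := fun i => by
    unfold TP
    simp only [one_mul]
    exact div_self (den_pos hμ hf i).ne'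
  exact ⟨fun i x => ⟨zero_le_one, le_refl 1⟩, by rw [h1, h1]⟩

lemma isCompact_polSet : IsCompact (PolSet (N := N) (Xs := Xs)) := by
  have h : PolSet (N := N) (Xs := Xs) =
      Set.univ.pi fun _ : GrpI => Set.univ.pi fun _ : (j : Fin N) → Xs j => Set.Icc (0:ℝ) 1 := by
    ext d
    exact ⟨fun hd i _ x _ => hd i x, fun hd i x => hd i (Set.mem_univ i) x (Set.mem_univ x)⟩
  rw [h]
  exact isCompact_univ_pi fun _ => isCompact_univ_pi fun _ => isCompact_Icc

lemma continuous_TP_d (i : GrpI) (μ f : GrpI → ((j : Fin N) → Xs j) → ℝ) :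
    Continuous fun d : Pl N Xs => TP i d μ f := by
  unfold TP
  refine Continuous.div_const (continuous_finset_sum _ fun x _ => ?_) _
  have h : Continuous fun d : Pl N Xs => d i x := (continuous_apply x).comp (continuous_apply i)
  exact (h.mul continuous_const).mul continuous_const

lemma isClosed_EOset (μ f : GrpI → ((j : Fin N) → Xs j) → ℝ) : IsClosed (EOset μ f) := by
  have h2 : IsClosed {d : Pl N Xs | TP GrpI.w d μ f = TP GrpI.b d μ f} :=
    isClosed_eq (continuous_TP_d _ _ _) (continuous_TP_d _ _ _)
  exact IsClosed.inter isCompact_polSet.isClosed h2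

lemma isCompact_EOset (μ f : GrpI → ((j : Fin N) → Xs j) → ℝ) : IsCompact (EOset μ f) := by
  have h2 : IsClosed {d : Pl N Xs | TP GrpI.w d μ f = TP GrpI.b d μ f} :=
    isClosed_eq (continuous_TP_d _ _ _) (continuous_TP_d _ _ _)
  exact isCompact_polSet.inter_right h2

lemma EOset_subset_polSet (μ f : GrpI → ((j : Fin N) → Xs j) → ℝ) :
    EOset μ f ⊆ PolSet := fun _ hd => hd.1

/-- Joint continuity of `TP` at points with nonvanishing denominator. -/
lemma continuousAt_TP (i : GrpI) (q₀ : PT N Xs × Pl N Xs) (ha : (∑ x, q₀.1.1 i x * q₀.1.2 i x) ≠ 0) :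
    ContinuousAt (fun q : PT N Xs × Pl N Xs => TP i q.2 q.1.1 q.1.2) q₀ := by
  have hμ : Continuous fun q : PT N Xs × Pl N Xs => q.1.1 i := (continuous_apply i).comp
    (continuous_fst.comp continuous_fst)
  have hf : Continuous fun q : PT N Xs × Pl N Xs => q.1.2 i := (continuous_apply i).comp
    (continuous_snd.comp continuous_fst)
  have hd : Continuous fun q : PT N Xs × Pl N Xs => q.2 i := (continuous_apply i).comp continuous_snd
  have hnum : Continuous fun q : PT N Xs × Pl N Xs => ∑ x, q.2 i x * q.1.1 i x * q.1.2 i x :=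
    continuous_finset_sum _ fun x _ =>
      ((((continuous_apply x).comp hd).mul ((continuous_apply x).comp hμ)).mul
        ((continuous_apply x).comp hf))
  have hden : Continuous fun q : PT N Xs × Pl N Xs => ∑ x, q.1.1 i x * q.1.2 i x :=
    continuous_finset_sum _ fun x _ =>
      (((continuous_apply x).comp hμ).mul ((continuous_apply x).comp hf))
  exact ContinuousAt.div hnum.continuousAt hden.continuousAt ha

/-- Continuity of `TP` in `(μ, f)` for a fixed policy. -/
lemma continuousAt_TP_a (i : GrpI) (d : Pl N Xs) (a₀ : PT N Xs) (ha : (∑ x, a₀.1 i x * a₀.2 i x) ≠ 0) :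
    ContinuousAt (fun a : PT N Xs => TP i d a.1 a.2) a₀ := by
  have h := continuousAt_TP (N := N) (Xs := Xs) i (a₀, d) ha
  have hg : ContinuousAt (fun a : PT N Xs => (a, d)) a₀ :=
    (continuous_id.prodMk continuous_const).continuousAt
  exact show ContinuousAt ((fun q : PT N Xs × Pl N Xs => TP i q.2 q.1.1 q.1.2) ∘
    (fun a : PT N Xs => (a, d))) a₀ from ContinuousAt.comp (x := a₀) h hg

end EOFrag
namespace EOFrag

set_option linter.unusedSectionVars false

variable {N : ℕ} {Xs : Fin N → Type} [∀ j, Fintype (Xs j)] [∀ j, Nonempty (Xs j)]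

theorem uhc_EOset : UpperHemicontinuousOn'
    (fun pf : PT N Xs => EOset pf.1 pf.2) SP := by
  rintro a haS V hV hsub
  classical
  set C : Set (Pl N Xs) := PolSet \ V with hCdef
  have hCc : IsCompact C := isCompact_polSet.diff hV
  have key : ∀ d ∈ C, ∃ U : Set (PT N Xs), U ∈ nhds a ∧ ∃ W : Set (Pl N Xs), W ∈ nhds d ∧
      ∀ a' ∈ U, ∀ d' ∈ W, TP GrpI.w d' a'.1 a'.2 ≠ TP GrpI.b d' a'.1 a'.2 := by
    intro d hd
    have hne : TP GrpI.w d a.1 a.2 ≠ TP GrpI.b d a.1 a.2 := fun heq => hd.2 (hsub ⟨hd.1, heq⟩)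
    have hca : ContinuousAt (fun q : PT N Xs × Pl N Xs =>
        TP GrpI.w q.2 q.1.1 q.1.2 - TP GrpI.b q.2 q.1.1 q.1.2) (a, d) :=
      (continuousAt_TP GrpI.w (a, d) (den_pos haS.1 haS.2 GrpI.w).ne').sub
        (continuousAt_TP GrpI.b (a, d) (den_pos haS.1 haS.2 GrpI.b).ne')
    have hev : ∀ᶠ q : PT N Xs × Pl N Xs in nhds (a, d),
        TP GrpI.w q.2 q.1.1 q.1.2 - TP GrpI.b q.2 q.1.1 q.1.2 ≠ 0 :=
      hca.eventually_ne (sub_ne_zero.mpr hne)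
    rw [nhds_prod_eq, Filter.eventually_prod_iff] at hev
    obtain ⟨pa, hpa, pb, hpb, hpq⟩ := hev
    exact ⟨{a' | pa a'}, hpa, {d' | pb d'}, hpb,
      fun a' ha' d' hd' => sub_ne_zero.mp (hpq ha' hd')⟩
  choose! U hU W hW hprop using key
  obtain ⟨t, htC, hcov⟩ := hCc.elim_nhds_subcover W fun d hd => hW d hd
  have hU0 : (⋂ d ∈ t, U d) ∈ nhds a :=
    (Filter.biInter_finset_mem t).mpr fun d hd => hU d (htC d hd)
  filter_upwards [mem_nhdsWithin_of_mem_nhds hU0] with a' ha'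
  intro d' hd'
  by_contra hd'V
  have hd'C : d' ∈ C := ⟨hd'.1, hd'V⟩
  have hmem := hcov hd'C
  simp only [Set.mem_iUnion] at hmem
  obtain ⟨d, hdt, hd'W⟩ := hmem
  have ha'U : a' ∈ U d := Set.mem_iInter₂.mp ha' d hdt
  exact hprop d (htC d hdt) a' ha'U d' hd'W hd'.2

/-- The other group. -/
def oth : GrpI → GrpI
  | GrpI.w => GrpI.b
  | GrpI.b => GrpI.w

/-- The scaling factor bringing group `i`'s TP down to the minimum of the two TPs. -/
def thet (d : Pl N Xs) (a : PT N Xs) (i : GrpI) : ℝ :=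
  max (TP i d a.1 a.2 - TP (oth i) d a.1 a.2) 0 / TP i d a.1 a.2

/-- The rescaled policy establishing lower hemicontinuity. -/
def eta (d : Pl N Xs) (a : PT N Xs) : Pl N Xs := fun i x => (1 - thet d a i) * d i x

lemma min_identity {ti tj : ℝ} (hti : 0 ≤ ti) (htj : 0 ≤ tj) :
    (1 - max (ti - tj) 0 / ti) * ti = min ti tj := by
  rcases eq_or_lt_of_le hti with h0 | h0
  · rw [← h0, mul_zero]
    exact (min_eq_left htj).symm
  · rw [sub_mul, one_mul, div_mul_cancel₀ _ h0.ne']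
    rcases le_total ti tj with h | h
    · rw [max_eq_right (sub_nonpos.mpr h), sub_zero, min_eq_left h]
    · rw [max_eq_left (sub_nonneg.mpr h), min_eq_right h]
      ring

lemma TP_scale {μ f : Pl N Xs} (i : GrpI) (c : ℝ) (d : Pl N Xs) (d' : Pl N Xs)
    (h : ∀ x, d' i x = c * d i x) : TP i d' μ f = c * TP i d μ f := by
  unfold TP
  have hnum : ∑ x, d' i x * μ i x * f i x = c * ∑ x, d i x * μ i x * f i x := by
    rw [Finset.mul_sum]
    refine Finset.sum_congr rfl fun x _ => ?_
    rw [h x]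
    ring
  rw [hnum, mul_div_assoc]

lemma thet_nonneg {a : PT N Xs} (haS : a ∈ SP) {d : Pl N Xs} (hd : IsPolicy d) (i : GrpI) :
    0 ≤ thet d a i :=
  div_nonneg (le_max_right _ _) (TP_nonneg haS.1 haS.2 hd i)

lemma thet_le_one {a : PT N Xs} (haS : a ∈ SP) {d : Pl N Xs} (hd : IsPolicy d) (i : GrpI) :
    thet d a i ≤ 1 := by
  apply div_le_one_of_le₀
  · exact max_le (sub_le_self _ (TP_nonneg haS.1 haS.2 hd (oth i))) (TP_nonneg haS.1 haS.2 hd i)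
  · exact TP_nonneg haS.1 haS.2 hd i

lemma TP_eta {a : PT N Xs} (haS : a ∈ SP) {d : Pl N Xs} (hd : IsPolicy d) (i : GrpI) :
    TP i (eta d a) a.1 a.2 = min (TP i d a.1 a.2) (TP (oth i) d a.1 a.2) := by
  rw [TP_scale i (1 - thet d a i) d (eta d a) fun x => rfl]
  exact min_identity (TP_nonneg haS.1 haS.2 hd i) (TP_nonneg haS.1 haS.2 hd (oth i))

lemma eta_mem_EOset {a : PT N Xs} (haS : a ∈ SP) {d : Pl N Xs} (hd : IsPolicy d) :
    eta d a ∈ EOset a.1 a.2 := by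
  constructor
  · intro i x
    have h1 := thet_nonneg haS hd i
    have h2 := thet_le_one haS hd i
    have h3 := (hd i x).1
    have h4 := (hd i x).2
    constructor
    · show 0 ≤ (1 - thet d a i) * d i x
      exact mul_nonneg (by linarith) h3
    · show (1 - thet d a i) * d i x ≤ 1
      nlinarith
  · rw [TP_eta haS hd GrpI.w, TP_eta haS hd GrpI.b]
    exact min_comm _ _

lemma eta_tendsto {a : PT N Xs} (haS : a ∈ SP) {d : Pl N Xs} (hd : d ∈ EOset a.1 a.2) :
    Filter.Tendsto (eta d) (nhdsWithin a SP) (nhds d) := by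
  rcases eq_or_lt_of_le (TP_nonneg haS.1 haS.2 hd.1 GrpI.w) with h0 | h0
  · -- degenerate case: both TPs vanish, so `d = 0` and `eta d a' = d` everywhere
    have hb0 : TP GrpI.b d a.1 a.2 = 0 := by rw [← hd.2, ← h0]
    have hzero : ∀ i x, d i x = 0 := by
      intro i x
      have hTP0 : TP i d a.1 a.2 = 0 := by
        cases i
        · exact h0.symm
        · exact hb0
      have hden := (den_pos haS.1 haS.2 i).ne'
      have hnum : ∑ y, d i y * a.1 i y * a.2 i y = 0 := by
        unfold TP at hTP0
        rcases div_eq_zero_iff.mp hTP0 with h | h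
        · exact h
        · exact absurd h hden
      have hterm := (Finset.sum_eq_zero_iff_of_nonneg fun y _ =>
        mul_nonneg (mul_nonneg (hd.1 i y).1 (haS.1.1 i y).le) (haS.2 i y).1.le).mp hnum
      have := hterm x (Finset.mem_univ x)
      rcases mul_eq_zero.mp this with h | h
      · rcases mul_eq_zero.mp h with h' | h'
        · exact h'
        · exact absurd h' (haS.1.1 i x).ne'
      · exact absurd h (haS.2 i x).1.ne'
    have heq : ∀ a' : PT N Xs, eta d a' = d := by
      intro a'
      funext i x
      show (1 - thet d a' i) * d i x = d i x
      rw [hzero i x]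
      ring
    rw [show eta d = fun _ : PT N Xs => d from funext heq]
    exact tendsto_const_nhds
  · rw [tendsto_pi_nhds]
    intro i
    rw [tendsto_pi_nhds]
    intro x
    have hTi : TP i d a.1 a.2 = TP GrpI.w d a.1 a.2 := by
      cases i
      · rfl
      · exact hd.2.symm
    have hne : TP i d a.1 a.2 ≠ 0 := by rw [hTi]; exact h0.ne'
    have hth : Filter.Tendsto (fun a' : PT N Xs => thet d a' i) (nhdsWithin a SP) (nhds 0) := by
      have hcw : ContinuousAt (fun a' : PT N Xs => TP i d a'.1 a'.2) a :=
        continuousAt_TP_a i d a (den_pos haS.1 haS.2 i).ne'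
      have hco : ContinuousAt (fun a' : PT N Xs => TP (oth i) d a'.1 a'.2) a :=
        continuousAt_TP_a (oth i) d a (den_pos haS.1 haS.2 (oth i)).ne'
      have hca : ContinuousAt (fun a' : PT N Xs => thet d a' i) a :=
        ContinuousAt.div ((hcw.sub hco).max continuousAt_const) hcw hne
      have hval : thet d a i = 0 := by
        unfold thet
        have hsub0 : TP i d a.1 a.2 - TP (oth i) d a.1 a.2 = 0 := by
          cases i
          · show TP GrpI.w d a.1 a.2 - TP GrpI.b d a.1 a.2 = 0
            rw [hd.2, sub_self]
          · show TP GrpI.b d a.1 a.2 - TP GrpI.w d a.1 a.2 = 0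
            rw [← hd.2, sub_self]
        rw [hsub0, max_eq_right (le_refl (0:ℝ)), zero_div]
      have hthis : Filter.Tendsto (fun a' : PT N Xs => thet d a' i) (nhdsWithin a SP)
          (nhds (thet d a i)) := hca.tendsto.mono_left nhdsWithin_le_nhds
      rwa [hval] at hthis
    have hmain : Filter.Tendsto (fun a' : PT N Xs => (1 - thet d a' i) * d i x)
        (nhdsWithin a SP) (nhds ((1 - 0) * d i x)) :=
      (tendsto_const_nhds.sub hth).mul_const _
    simpa [eta] using hmain

theorem lhc_EOset : LowerHemicontinuousOn'
    (fun pf : PT N Xs => EOset pf.1 pf.2) SP := by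
  rintro a haS V hV ⟨d, hdEO, hdV⟩
  have h1 : ∀ᶠ a' in nhdsWithin a SP, eta d a' ∈ V :=
    (eta_tendsto haS hdEO).eventually (hV.eventually_mem hdV)
  filter_upwards [h1, self_mem_nhdsWithin] with a' h1' (h2' : a' ∈ SP)
  exact ⟨eta d a', eta_mem_EOset h2' hdEO.1, h1'⟩

end EOFrag
namespace EOFrag

set_option linter.unusedSectionVars false
set_option maxHeartbeats 1000000

variable {N : ℕ} {Xs : Fin N → Type} [∀ j, Fintype (Xs j)] [∀ j, Nonempty (Xs j)]

lemma entry_sq_le (v : Pl N Xs) (i : GrpI) (x : (j : Fin N) → Xs j) :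
    (v i x) ^ 2 ≤ ∑ i', ∑ x', (v i' x') ^ 2 := by
  have h1 : (v i x) ^ 2 ≤ ∑ x', (v i x') ^ 2 :=
    Finset.single_le_sum (f := fun x' => (v i x') ^ 2) (fun y _ => sq_nonneg _)
      (Finset.mem_univ x)
  have h2 : ∑ x', (v i x') ^ 2 ≤ ∑ i', ∑ x', (v i' x') ^ 2 :=
    Finset.single_le_sum (f := fun i' => ∑ x', (v i' x') ^ 2)
      (fun i' _ => Finset.sum_nonneg fun x' _ => sq_nonneg _) (Finset.mem_univ i)
  linarith

lemma dist_le_pairDist (μ f μ' f' : Pl N Xs) :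
    dist ((μ, f) : PT N Xs) ((μ', f') : PT N Xs) ≤ pairDist μ f μ' f' := by
  have hnn : 0 ≤ pairDist μ f μ' f' := Real.sqrt_nonneg _
  have hA : (0:ℝ) ≤ ∑ i', ∑ x', (μ i' x' - μ' i' x') ^ 2 :=
    Finset.sum_nonneg fun _ _ => Finset.sum_nonneg fun _ _ => sq_nonneg _
  have hB : (0:ℝ) ≤ ∑ i', ∑ x', (f i' x' - f' i' x') ^ 2 :=
    Finset.sum_nonneg fun _ _ => Finset.sum_nonneg fun _ _ => sq_nonneg _
  rw [Prod.dist_eq]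
  apply max_le
  · rw [dist_pi_le_iff hnn]
    intro i
    rw [dist_pi_le_iff hnn]
    intro x
    rw [Real.dist_eq]
    calc |μ i x - μ' i x| = Real.sqrt ((μ i x - μ' i x) ^ 2) := (Real.sqrt_sq_eq_abs _).symm
    _ ≤ pairDist μ f μ' f' := Real.sqrt_le_sqrt (by
        have := entry_sq_le (fun i' x' => μ i' x' - μ' i' x') i x
        linarith)
  · rw [dist_pi_le_iff hnn]
    intro i
    rw [dist_pi_le_iff hnn]
    intro x
    rw [Real.dist_eq]
    calc |f i x - f' i x| = Real.sqrt ((f i x - f' i x) ^ 2) := (Real.sqrt_sq_eq_abs _).symm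
    _ ≤ pairDist μ f μ' f' := Real.sqrt_le_sqrt (by
        have := entry_sq_le (fun i' x' => f i' x' - f' i' x') i x
        linarith)

lemma polDist_self (d : Pl N Xs) : polDist d d = 0 := by
  simp [polDist]

lemma continuous_polDist_left (d' : Pl N Xs) : Continuous fun d : Pl N Xs => polDist d d' := by
  apply Real.continuous_sqrt.comp
  refine continuous_finset_sum _ fun i _ => continuous_finset_sum _ fun x _ => ?_
  have h : Continuous fun d : Pl N Xs => d i x := (continuous_apply x).comp (continuous_apply i)
  exact (h.sub continuous_const).pow 2

lemma profDist_self (c : GrpI → ℝ) (d : Pl N Xs) : profDist c d c d = 0 := by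
  simp [profDist]

lemma continuous_profDist_left (c' : GrpI → ℝ) (d' : Pl N Xs) :
    Continuous fun p : (GrpI → ℝ) × Pl N Xs => profDist p.1 p.2 c' d' := by
  apply Real.continuous_sqrt.comp
  apply Continuous.add
  · refine continuous_finset_sum _ fun i _ => ?_
    exact (((continuous_apply i).comp continuous_fst).sub continuous_const).pow 2
  · refine continuous_finset_sum _ fun i _ => continuous_finset_sum _ fun x _ => ?_
    have h : Continuous fun p : (GrpI → ℝ) × Pl N Xs => p.2 i x :=
      (continuous_apply x).comp ((continuous_apply i).comp continuous_snd)
    exact (h.sub continuous_const).pow 2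

lemma continuous_UF (Γ : Game N Xs) :
    Continuous fun q : PT N Xs × Pl N Xs => Γ.UF q.2 q.1.1 q.1.2 := by
  unfold Game.UF
  refine continuous_finset_sum _ fun i _ => continuous_finset_sum _ fun x _ => ?_
  have hd : Continuous fun q : PT N Xs × Pl N Xs => q.2 i x :=
    (continuous_apply x).comp ((continuous_apply i).comp continuous_snd)
  have hμ : Continuous fun q : PT N Xs × Pl N Xs => q.1.1 i x :=
    (continuous_apply x).comp ((continuous_apply i).comp (continuous_fst.comp continuous_fst))
  have hf : Continuous fun q : PT N Xs × Pl N Xs => q.1.2 i x :=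
    (continuous_apply x).comp ((continuous_apply i).comp (continuous_snd.comp continuous_fst))
  exact (hd.mul hμ).mul ((hf.mul continuous_const).sub
    ((continuous_const.sub hf).mul continuous_const))

lemma eta_at_base {a : PT N Xs} (hd : d ∈ EOset a.1 a.2) : eta d a = d := by
  funext i x
  show (1 - thet d a i) * d i x = d i x
  have hval : thet d a i = 0 := by
    unfold thet
    have hsub0 : TP i d a.1 a.2 - TP (oth i) d a.1 a.2 = 0 := by
      cases i
      · show TP GrpI.w d a.1 a.2 - TP GrpI.b d a.1 a.2 = 0
        rw [hd.2, sub_self]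
      · show TP GrpI.b d a.1 a.2 - TP GrpI.w d a.1 a.2 = 0
        rw [← hd.2, sub_self]
    rw [hsub0, max_eq_right (le_refl (0:ℝ)), zero_div]
  rw [hval]
  ring

/-- Berge-type upper hemicontinuity of the firm-optimal set under the EO control,
at a single point of `Δ° × (0,1)`. -/
theorem smax_uhc (Γ : Game N Xs) (a : PT N Xs) (haS : a ∈ SP) {δ : ℝ} (hδ : 0 < δ) :
    ∃ ε > 0, ∀ a' ∈ SP (N := N) (Xs := Xs), dist a' a ≤ ε →
      ∀ dh ∈ Γ.Smax (fun μ' f' => EOset μ' f') a'.1 a'.2,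
        ∃ d' ∈ Γ.Smax (fun μ' f' => EOset μ' f') a.1 a.2, polDist dh d' < δ := by
  classical
  set Vδ : Set (Pl N Xs) :=
    {dh | ∃ d' ∈ Γ.Smax (fun μ' f' => EOset μ' f') a.1 a.2, polDist dh d' < δ} with hVδ
  have hVo : IsOpen Vδ := by
    have hrw : Vδ = ⋃ d' ∈ Γ.Smax (fun μ' f' => EOset μ' f') a.1 a.2,
        {dh | polDist dh d' < δ} := by
      ext dh
      simp [hVδ]
    rw [hrw]
    exact isOpen_biUnion fun d' _ => isOpen_lt (continuous_polDist_left d') continuous_const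
  set C : Set (Pl N Xs) := PolSet \ Vδ with hCdef
  have hCc : IsCompact C := isCompact_polSet.diff hVo
  have key : ∀ d ∈ C, ∃ U : Set (PT N Xs), U ∈ nhds a ∧ ∃ W : Set (Pl N Xs), W ∈ nhds d ∧
      ∀ a' ∈ U, a' ∈ SP → ∀ d'' ∈ W, d'' ∉ Γ.Smax (fun μ' f' => EOset μ' f') a'.1 a'.2 := by
    intro d hd
    have hdns : d ∉ Γ.Smax (fun μ' f' => EOset μ' f') a.1 a.2 := by
      intro hmem
      exact hd.2 ⟨d, hmem, by rw [polDist_self]; exact hδ⟩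
    by_cases hdEO : d ∈ EOset a.1 a.2
    · -- d is feasible but strictly dominated at a
      have hdom : ∃ d₀ ∈ EOset a.1 a.2,
          Γ.UF d a.1 a.2 < Γ.UF d₀ a.1 a.2 := by
        by_contra hno
        push_neg at hno
        exact hdns ⟨hdEO, fun d' hd' => hno d' hd'⟩
      obtain ⟨d₀, hd₀EO, hlt⟩ := hdom
      set m : ℝ := (Γ.UF d a.1 a.2 + Γ.UF d₀ a.1 a.2) / 2 with hm
      have hm1 : Γ.UF d a.1 a.2 < m := by rw [hm]; linarith
      have hm2 : m < Γ.UF d₀ a.1 a.2 := by rw [hm]; linarith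
      -- the competing policy eta d₀ a' has utility above m near a
      have htend : Filter.Tendsto (fun a' : PT N Xs => Γ.UF (eta d₀ a') a'.1 a'.2)
          (nhdsWithin a SP) (nhds (Γ.UF d₀ a.1 a.2)) := by
        have h1 : Filter.Tendsto (fun a' : PT N Xs => ((a', eta d₀ a') : PT N Xs × Pl N Xs))
            (nhdsWithin a SP) (nhds (a, d₀)) := by
          refine Filter.Tendsto.prodMk_nhds ?_ (eta_tendsto haS hd₀EO)
          exact Filter.tendsto_id.mono_left nhdsWithin_le_nhds
        have h2 : Filter.Tendsto (fun q : PT N Xs × Pl N Xs => Γ.UF q.2 q.1.1 q.1.2)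
            (nhds ((a, d₀) : PT N Xs × Pl N Xs)) (nhds (Γ.UF d₀ a.1 a.2)) :=
          (continuous_UF Γ).tendsto _
        have h3 := h2.comp h1
        exact h3
      have hev1 : ∀ᶠ a' in nhdsWithin a SP,
          m < Γ.UF (eta d₀ a') a'.1 a'.2 :=
        htend.eventually (eventually_gt_nhds hm2)
      obtain ⟨O1, hO1o, hO1a, hO1sub⟩ := mem_nhdsWithin.mp (Filter.eventually_iff.mp hev1)
      -- the utility of nearby policies at nearby points is below m
      have hca : ContinuousAt (fun q : PT N Xs × Pl N Xs => Γ.UF q.2 q.1.1 q.1.2) (a, d) :=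
        (continuous_UF Γ).continuousAt
      have hev2 : ∀ᶠ q : PT N Xs × Pl N Xs in nhds (a, d), Γ.UF q.2 q.1.1 q.1.2 < m :=
        hca.eventually (eventually_lt_nhds hm1)
      rw [nhds_prod_eq, Filter.eventually_prod_iff] at hev2
      obtain ⟨pa, hpa, pb, hpb, hpq⟩ := hev2
      refine ⟨O1 ∩ {a' | pa a'}, Filter.inter_mem (hO1o.mem_nhds hO1a) hpa,
        {d'' | pb d''}, hpb, ?_⟩
      rintro a' ⟨ha'O, ha'p⟩ ha'S d'' hd''W hd''Smax
      have hUFd'' : Γ.UF d'' a'.1 a'.2 < m := hpq ha'p hd''W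
      have hUFeta : m < Γ.UF (eta d₀ a') a'.1 a'.2 := hO1sub ⟨ha'O, ha'S⟩
      have heta : eta d₀ a' ∈ EOset a'.1 a'.2 := eta_mem_EOset ha'S hd₀EO.1
      have := hd''Smax.2 (eta d₀ a') heta
      linarith
    · -- d is infeasible at a
      have hne : TP GrpI.w d a.1 a.2 ≠ TP GrpI.b d a.1 a.2 := by
        intro heq
        exact hdEO ⟨hd.1, heq⟩
      have hca : ContinuousAt (fun q : PT N Xs × Pl N Xs =>
          TP GrpI.w q.2 q.1.1 q.1.2 - TP GrpI.b q.2 q.1.1 q.1.2) (a, d) :=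
        (continuousAt_TP GrpI.w (a, d) (den_pos haS.1 haS.2 GrpI.w).ne').sub
          (continuousAt_TP GrpI.b (a, d) (den_pos haS.1 haS.2 GrpI.b).ne')
      have hev : ∀ᶠ q : PT N Xs × Pl N Xs in nhds (a, d),
          TP GrpI.w q.2 q.1.1 q.1.2 - TP GrpI.b q.2 q.1.1 q.1.2 ≠ 0 :=
        hca.eventually_ne (sub_ne_zero.mpr hne)
      rw [nhds_prod_eq, Filter.eventually_prod_iff] at hev
      obtain ⟨pa, hpa, pb, hpb, hpq⟩ := hev
      refine ⟨{a' | pa a'}, hpa, {d'' | pb d''}, hpb, ?_⟩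
      intro a' ha' _ d'' hd'' hd''Smax
      exact sub_ne_zero.mp (hpq ha' hd'') hd''Smax.1.2
  choose! U hU W hW hprop using key
  obtain ⟨t, htC, hcov⟩ := hCc.elim_nhds_subcover W fun d hd => hW d hd
  have hU0 : (⋂ d ∈ t, U d) ∈ nhds a :=
    (Filter.biInter_finset_mem t).mpr fun d hd => hU d (htC d hd)
  obtain ⟨r, hr, hball⟩ := Metric.mem_nhds_iff.mp hU0
  refine ⟨r / 2, by linarith, ?_⟩
  intro a' ha'S ha'dist dh hdh
  have ha'U : a' ∈ ⋂ d ∈ t, U d := hball (by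
    rw [Metric.mem_ball]
    calc dist a' a ≤ r / 2 := ha'dist
    _ < r := by linarith)
  by_contra hnot
  push_neg at hnot
  have hdhC : dh ∈ C := by
    refine ⟨hdh.1.1, ?_⟩
    intro hmem
    obtain ⟨d', hd', hlt⟩ := hmem
    exact absurd hlt (not_lt.mpr (hnot d' hd'))
  have hmem := hcov hdhC
  simp only [Set.mem_iUnion] at hmem
  obtain ⟨d, hdt, hdhW⟩ := hmem
  exact hprop d (htC d hdt) a' (Set.mem_iInter₂.mp ha'U d hdt) ha'S dh hdhW hdh

end EOFrag
namespace EOFrag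

set_option linter.unusedSectionVars false
set_option maxHeartbeats 1000000

variable {N : ℕ} {Xs : Fin N → Type} [∀ j, Fintype (Xs j)] [∀ j, Nonempty (Xs j)]
variable (Γ : Game N Xs)

lemma integrable_tg : Integrable fun t => t * Γ.g t := by
  refine Integrable.mono' Γ.g_abs_int ?_ ?_
  · exact aestronglyMeasurable_id.mul Γ.g_int.aestronglyMeasurable
  · refine Filter.Eventually.of_forall fun t => ?_
    rw [Real.norm_eq_abs, abs_mul, abs_of_pos (Γ.g_pos t)]

lemma G_strictMono : StrictMono Γ.G := by
  intro x y hxy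
  have hdiff : (∫ t in Set.Iic y, Γ.g t) - ∫ t in Set.Iic x, Γ.g t = ∫ t in x..y, Γ.g t :=
    intervalIntegral.integral_Iic_sub_Iic Γ.g_int.integrableOn Γ.g_int.integrableOn
  have hpos : 0 < ∫ t in x..y, Γ.g t :=
    intervalIntegral.intervalIntegral_pos_of_pos Γ.g_int.intervalIntegrable Γ.g_pos hxy
  show Γ.G x < Γ.G y
  unfold Game.G
  linarith

lemma continuous_Iic_int {φ : ℝ → ℝ} (hφ : Integrable φ) :
    Continuous fun c => ∫ t in Set.Iic c, φ t := by
  have h2 : Continuous fun c => ∫ t in (0:ℝ)..c, φ t := hφ.continuous_primitive 0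
  have h3 : (fun c => ∫ t in Set.Iic c, φ t)
      = fun c => (∫ t in (0:ℝ)..c, φ t) + ∫ t in Set.Iic (0:ℝ), φ t := by
    funext c
    have h4 : (∫ t in Set.Iic c, φ t) - ∫ t in Set.Iic (0:ℝ), φ t = ∫ t in (0:ℝ)..c, φ t :=
      intervalIntegral.integral_Iic_sub_Iic hφ.integrableOn hφ.integrableOn
    linarith
  rw [h3]
  exact h2.add continuous_const

lemma continuous_G : Continuous Γ.G := continuous_Iic_int Γ.g_int

lemma G_pos (c : ℝ) : 0 < Γ.G c := by
  have hsupp : Function.support Γ.g = Set.univ := Set.eq_univ_of_forall fun t => (Γ.g_pos t).ne'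
  refine (setIntegral_pos_iff_support_of_nonneg_ae
    (ae_of_all _ fun t => (Γ.g_pos t).le) Γ.g_int.integrableOn).mpr ?_
  rw [hsupp, Set.univ_inter, Real.volume_Iic]
  exact ENNReal.zero_lt_top

lemma G_lt_one (c : ℝ) : Γ.G c < 1 := by
  have hsupp : Function.support Γ.g = Set.univ := Set.eq_univ_of_forall fun t => (Γ.g_pos t).ne'
  have hcompl := MeasureTheory.integral_add_compl (measurableSet_Iic (a := c)) Γ.g_int
  rw [Set.compl_Iic] at hcompl
  have hpos : 0 < ∫ t in Set.Ioi c, Γ.g t := by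
    refine (setIntegral_pos_iff_support_of_nonneg_ae
      (ae_of_all _ fun t => (Γ.g_pos t).le) Γ.g_int.integrableOn).mpr ?_
    rw [hsupp, Set.univ_inter, Real.volume_Ioi]
    exact ENNReal.zero_lt_top
  have hnorm := Γ.g_norm
  show Γ.G c < 1
  unfold Game.G
  linarith

/-- The net benefit `∑ (p(x|i,q) - p(x|i,u)) d(x)`. -/
def Bq (i : GrpI) (di : ((j : Fin N) → Xs j) → ℝ) : ℝ :=
  ∑ x, (Γ.p i x Cls.q - Γ.p i x Cls.u) * di x

lemma sum_decomp (c : ℝ) (i : GrpI) (di : ((j : Fin N) → Xs j) → ℝ) :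
    (∑ x, (Γ.G c * Γ.p i x Cls.q + (1 - Γ.G c) * Γ.p i x Cls.u) * di x)
      = Γ.G c * Bq Γ i di + ∑ x, Γ.p i x Cls.u * di x := by
  unfold Bq
  rw [Finset.mul_sum, ← Finset.sum_add_distrib]
  exact Finset.sum_congr rfl fun x _ => by ring

/-- The unique applicant best response: `Uapp` is uniquely maximized at `ω · B`. -/
lemma Uapp_lt (i : GrpI) (di : ((j : Fin N) → Xs j) → ℝ) {c' : ℝ}
    (h : c' ≠ Γ.om * Bq Γ i di) :
    Γ.Uapp i c' di < Γ.Uapp i (Γ.om * Bq Γ i di) di := by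
  set cb := Γ.om * Bq Γ i di with hcb
  have hint : Integrable fun t => (cb - t) * Γ.g t := by
    have h1 := (Γ.g_int.const_mul cb).sub (integrable_tg Γ)
    have h2 : (fun t => (cb - t) * Γ.g t) = fun t => cb * Γ.g t - t * Γ.g t := by
      funext t
      ring
    rw [h2]
    exact h1
  have hint2 : Integrable fun t => (t - cb) * Γ.g t := by
    have h1 := (integrable_tg Γ).sub (Γ.g_int.const_mul cb)
    have h2 : (fun t => (t - cb) * Γ.g t) = fun t => t * Γ.g t - cb * Γ.g t := by
      funext t
      ring
    rw [h2]
    exact h1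
  have hG : Γ.G cb - Γ.G c' = ∫ t in c'..cb, Γ.g t :=
    intervalIntegral.integral_Iic_sub_Iic Γ.g_int.integrableOn Γ.g_int.integrableOn
  have hH : (∫ t in Set.Iic cb, t * Γ.g t) - ∫ t in Set.Iic c', t * Γ.g t
      = ∫ t in c'..cb, t * Γ.g t :=
    intervalIntegral.integral_Iic_sub_Iic (integrable_tg Γ).integrableOn
      (integrable_tg Γ).integrableOn
  have hsplit : ∫ t in c'..cb, (cb - t) * Γ.g t
      = cb * (∫ t in c'..cb, Γ.g t) - ∫ t in c'..cb, t * Γ.g t := by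
    rw [← intervalIntegral.integral_const_mul, ← intervalIntegral.integral_sub
      ((Γ.g_int.const_mul cb).intervalIntegrable) ((integrable_tg Γ).intervalIntegrable)]
    exact intervalIntegral.integral_congr fun t _ => by ring
  have hdiff : Γ.Uapp i cb di - Γ.Uapp i c' di = ∫ t in c'..cb, (cb - t) * Γ.g t := by
    unfold Game.Uapp
    rw [sum_decomp, sum_decomp, hsplit, ← hG, ← hH]
    ring
  have hposint : 0 < ∫ t in c'..cb, (cb - t) * Γ.g t := by
    rcases lt_or_gt_of_ne h with hlt | hgt
    · exact intervalIntegral.intervalIntegral_pos_of_pos_on hint.intervalIntegrable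
        (fun t ht => mul_pos (by linarith [ht.2]) (Γ.g_pos t)) hlt
    · have h2 : 0 < ∫ t in cb..c', (t - cb) * Γ.g t :=
        intervalIntegral.intervalIntegral_pos_of_pos_on hint2.intervalIntegrable
          (fun t ht => mul_pos (by linarith [ht.1]) (Γ.g_pos t)) hgt
      have h3 : ∫ t in c'..cb, (cb - t) * Γ.g t = ∫ t in cb..c', (t - cb) * Γ.g t := by
        rw [intervalIntegral.integral_symm cb c', ← intervalIntegral.integral_neg]
        exact intervalIntegral.integral_congr fun t _ => by ring
      rw [h3]
      exact h2
  linarith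

lemma bestResponds_eq {c : GrpI → ℝ} {d : Pl N Xs} (hbr : Γ.BestResponds c d) (i : GrpI) :
    c i = Γ.om * Bq Γ i (d i) := by
  by_contra hne
  have h1 := hbr i (Γ.om * Bq Γ i (d i))
  have h2 := Uapp_lt Γ i (d i) hne
  linarith

/-- Firm optimality pins down the policy wherever the marginal value is nonzero. -/
lemma firm_opt_pin {μ f d : Pl N Xs} (hd : IsPolicy d)
    (hopt : ∀ d', IsPolicy d' → Γ.UF d' μ f ≤ Γ.UF d μ f) (i : GrpI) (x : (j : Fin N) → Xs j)
    (hW : μ i x * (f i x * Γ.vq - (1 - f i x) * Γ.vu) ≠ 0) :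
    d i x = if 0 < μ i x * (f i x * Γ.vq - (1 - f i x) * Γ.vu) then 1 else 0 := by
  classical
  set W := μ i x * (f i x * Γ.vq - (1 - f i x) * Γ.vu) with hWdef
  set v : ℝ := if 0 < W then 1 else 0 with hv
  set d' : Pl N Xs := fun i' x' => if i' = i ∧ x' = x then v else d i' x' with hd'
  have hv01 : v ∈ Set.Icc (0:ℝ) 1 := by
    rw [hv]
    split_ifs
    · exact ⟨zero_le_one, le_rfl⟩
    · exact ⟨le_rfl, zero_le_one⟩
  have hd'pol : IsPolicy d' := by
    intro i' x'
    show (if i' = i ∧ x' = x then v else d i' x') ∈ Set.Icc (0:ℝ) 1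
    split_ifs
    · exact hv01
    · exact hd i' x'
  have hUF : Γ.UF d' μ f - Γ.UF d μ f = (v - d i x) * W := by
    unfold Game.UF
    rw [← Finset.sum_sub_distrib]
    have hsum : ∀ i', ((∑ x', d' i' x' * μ i' x' * (f i' x' * Γ.vq - (1 - f i' x') * Γ.vu))
        - ∑ x', d i' x' * μ i' x' * (f i' x' * Γ.vq - (1 - f i' x') * Γ.vu))
        = if i' = i then (v - d i x) * W else 0 := by
      intro i'
      rw [← Finset.sum_sub_distrib]
      by_cases hi' : i' = i
      · subst hi'
        rw [if_pos rfl, Finset.sum_eq_single x]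
        · have hdx : d' i' x = v := by simp [hd']
          rw [hdx, hWdef]
          ring
        · intro x' _ hx'
          have hdx : d' i' x' = d i' x' := by simp [hd', hx']
          rw [hdx, sub_self]
        · intro hx
          exact absurd (Finset.mem_univ x) hx
      · rw [if_neg hi']
        apply Finset.sum_eq_zero
        intro x' _
        have hdx : d' i' x' = d i' x' := by simp [hd', hi']
        rw [hdx, sub_self]
    rw [Finset.sum_congr rfl fun i' _ => hsum i', Finset.sum_ite_eq' Finset.univ i
      (fun _ => (v - d i x) * W), if_pos (Finset.mem_univ i)]
  have hle := hopt d' hd'pol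
  have hkey : (v - d i x) * W ≤ 0 := by linarith
  have hd01 := hd i x
  rcases lt_or_gt_of_ne hW with hneg | hpos
  · have hv0 : v = 0 := by
      rw [hv]
      exact if_neg (not_lt.mpr hneg.le)
    rw [hv0] at hkey ⊢
    have h1 : d i x ≤ 0 := by nlinarith
    exact le_antisymm h1 hd01.1
  · have hv1 : v = 1 := by
      rw [hv]
      exact if_pos hpos
    rw [hv1] at hkey ⊢
    have h1 : 1 ≤ d i x := by nlinarith
    exact le_antisymm hd01.2 h1

lemma p_pos (i : GrpI) (x : (j : Fin N) → Xs j) (y : Cls) : 0 < Γ.p i x y :=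
  mul_pos (Γ.pY_pos _ y) (Γ.pC_pos i x)

lemma lam_pos (i : GrpI) : 0 < Γ.lam i := by
  cases i
  · exact Γ.lamw_pos
  · show (0:ℝ) < 1 - Γ.lamw
    linarith [Γ.lamw_lt_one]

lemma fden_pos (c : GrpI → ℝ) (i : GrpI) (x : (j : Fin N) → Xs j) :
    0 < Γ.G (c i) * Γ.p i x Cls.q + (1 - Γ.G (c i)) * Γ.p i x Cls.u := by
  have h1 := G_pos Γ (c i)
  have h2 := G_lt_one Γ (c i)
  have h3 := p_pos Γ i x Cls.q
  have h4 := p_pos Γ i x Cls.u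
  nlinarith

lemma muRE_pos (c : GrpI → ℝ) (i : GrpI) (x : (j : Fin N) → Xs j) : 0 < Γ.muRE c i x :=
  mul_pos (lam_pos Γ i) (fden_pos Γ c i x)

lemma fRE_mem (c : GrpI → ℝ) (i : GrpI) (x : (j : Fin N) → Xs j) :
    Γ.fRE c i x ∈ Set.Ioo (0:ℝ) 1 := by
  have hA : 0 < Γ.G (c i) * Γ.p i x Cls.q := mul_pos (G_pos Γ _) (p_pos Γ i x _)
  have hB : 0 < (1 - Γ.G (c i)) * Γ.p i x Cls.u :=
    mul_pos (by linarith [G_lt_one Γ (c i)]) (p_pos Γ i x _)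
  constructor
  · show 0 < Γ.G (c i) * Γ.p i x Cls.q /
      (Γ.G (c i) * Γ.p i x Cls.q + (1 - Γ.G (c i)) * Γ.p i x Cls.u)
    exact div_pos hA (by linarith)
  · show Γ.G (c i) * Γ.p i x Cls.q /
      (Γ.G (c i) * Γ.p i x Cls.q + (1 - Γ.G (c i)) * Γ.p i x Cls.u) < 1
    rw [div_lt_one (by linarith)]
    linarith

lemma sum_p (i : GrpI) (y : Cls) : ∑ x, Γ.p i x y = 1 := by
  classical
  unfold Game.p
  rw [← Finset.sum_fiberwise Finset.univ (fun x => Γ.proj x)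
    (fun x => Γ.pY (Γ.proj x) y * Γ.pC i x)]
  have hfib : ∀ xY, (∑ x ∈ Finset.univ.filter (fun x => Γ.proj x = xY),
      Γ.pY (Γ.proj x) y * Γ.pC i x) = Γ.pY xY y := by
    intro xY
    have h1 : (∑ x ∈ Finset.univ.filter (fun x => Γ.proj x = xY),
        Γ.pY (Γ.proj x) y * Γ.pC i x)
        = ∑ x ∈ Finset.univ.filter (fun x => Γ.proj x = xY), Γ.pY xY y * Γ.pC i x := by
      refine Finset.sum_congr rfl fun x hx => ?_
      rw [(Finset.mem_filter.mp hx).2]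
    have h2 : (∑ x ∈ Finset.univ.filter (fun x => Γ.proj x = xY), Γ.pC i x) = 1 :=
      Γ.pC_sum i xY
    rw [h1, ← Finset.mul_sum, h2, mul_one]
  rw [Finset.sum_congr rfl fun xY _ => hfib xY, Γ.pY_sum y]

lemma sum_GrpI (φ : GrpI → ℝ) : ∑ i, φ i = φ GrpI.w + φ GrpI.b := by
  rw [show (Finset.univ : Finset GrpI) = {GrpI.w, GrpI.b} from rfl,
    Finset.sum_pair (fun h => GrpI.noConfusion h)]

lemma muRE_sum (c : GrpI → ℝ) : ∑ i, ∑ x, Γ.muRE c i x = 1 := by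
  have hx : ∀ i, ∑ x, Γ.muRE c i x = Γ.lam i := by
    intro i
    unfold Game.muRE
    rw [← Finset.mul_sum]
    have hsum : (∑ x, (Γ.G (c i) * Γ.p i x Cls.q + (1 - Γ.G (c i)) * Γ.p i x Cls.u))
        = Γ.G (c i) * (∑ x, Γ.p i x Cls.q) + (1 - Γ.G (c i)) * ∑ x, Γ.p i x Cls.u := by
      rw [Finset.sum_add_distrib, Finset.mul_sum, Finset.mul_sum]
    rw [hsum, sum_p, sum_p]
    ring
  rw [Finset.sum_congr rfl fun i _ => hx i, sum_GrpI]
  show Γ.lamw + (1 - Γ.lamw) = 1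
  ring

lemma REpt_mem_SP (c : GrpI → ℝ) : ((Γ.muRE c, Γ.fRE c) : PT N Xs) ∈ SP :=
  ⟨⟨fun i x => muRE_pos Γ c i x, muRE_sum Γ c⟩, fun i x => fRE_mem Γ c i x⟩

lemma continuous_REpt : Continuous fun c : GrpI → ℝ => ((Γ.muRE c, Γ.fRE c) : PT N Xs) := by
  have hG : ∀ i : GrpI, Continuous fun c : GrpI → ℝ => Γ.G (c i) :=
    fun i => (continuous_G Γ).comp (continuous_apply i)
  refine Continuous.prodMk ?_ ?_
  · refine continuous_pi fun i => continuous_pi fun x => ?_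
    show Continuous fun c : GrpI → ℝ =>
      Γ.lam i * (Γ.G (c i) * Γ.p i x Cls.q + (1 - Γ.G (c i)) * Γ.p i x Cls.u)
    exact continuous_const.mul (((hG i).mul continuous_const).add
      ((continuous_const.sub (hG i)).mul continuous_const))
  · refine continuous_pi fun i => continuous_pi fun x => ?_
    show Continuous fun c : GrpI → ℝ => Γ.G (c i) * Γ.p i x Cls.q /
      (Γ.G (c i) * Γ.p i x Cls.q + (1 - Γ.G (c i)) * Γ.p i x Cls.u)
    exact Continuous.div ((hG i).mul continuous_const)
      (((hG i).mul continuous_const).add ((continuous_const.sub (hG i)).mul continuous_const))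
      fun c => (fden_pos Γ c i x).ne'

lemma continuous_Uapp (i : GrpI) :
    Continuous fun q : ℝ × (((j : Fin N) → Xs j) → ℝ) => Γ.Uapp i q.1 q.2 := by
  unfold Game.Uapp
  refine Continuous.sub (continuous_const.mul (continuous_finset_sum _ fun x _ => ?_)) ?_
  · exact ((((continuous_G Γ).comp continuous_fst).mul continuous_const).add
      ((continuous_const.sub ((continuous_G Γ).comp continuous_fst)).mul
        continuous_const)).mul ((continuous_apply x).comp continuous_snd)
  · exact (continuous_Iic_int (integrable_tg Γ)).comp continuous_fst

end EOFrag
namespace EOFrag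

set_option linter.unusedSectionVars false
set_option maxHeartbeats 1000000

variable {N : ℕ} {Xs : Fin N → Type} [∀ j, Fintype (Xs j)] [∀ j, Nonempty (Xs j)]
variable (Γ : Game N Xs)

/-- The set of discriminatory equilibrium threshold profiles. -/
def CEset : Set (GrpI → ℝ) :=
  {c | ∃ d, Γ.IsEquilibrium c d ∧ c GrpI.w ≠ c GrpI.b}

lemma CEset_finite : (CEset Γ).Finite := by
  classical
  set A1 : Set ℝ := Set.range (fun Ti : Finset ((j : Fin N) → Xs j) × GrpI =>
    Γ.om * ∑ x ∈ Ti.1, (Γ.p Ti.2 x Cls.q - Γ.p Ti.2 x Cls.u)) with hA1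
  have hA1fin : A1.Finite := Set.finite_range _
  set A2 : Set ℝ := ⋃ i : GrpI, ⋃ x : (j : Fin N) → Xs j,
    {r | Γ.G r * (Γ.p i x Cls.q * Γ.vq) = (1 - Γ.G r) * (Γ.p i x Cls.u * Γ.vu)} with hA2
  have hA2fin : A2.Finite := by
    refine Set.finite_iUnion fun i => Set.finite_iUnion fun x => Set.Subsingleton.finite ?_
    intro r1 h1 r2 h2
    simp only [Set.mem_setOf_eq] at h1 h2
    have hpq := p_pos Γ i x Cls.q
    have hpu := p_pos Γ i x Cls.u
    have hvq := Γ.vq_pos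
    have hvu := Γ.vu_pos
    have hd : 0 < Γ.p i x Cls.q * Γ.vq + Γ.p i x Cls.u * Γ.vu := by positivity
    have hGr : Γ.G r1 = Γ.G r2 := by
      have e1 : Γ.G r1 * (Γ.p i x Cls.q * Γ.vq + Γ.p i x Cls.u * Γ.vu)
          = Γ.p i x Cls.u * Γ.vu := by linear_combination h1
      have e2 : Γ.G r2 * (Γ.p i x Cls.q * Γ.vq + Γ.p i x Cls.u * Γ.vu)
          = Γ.p i x Cls.u * Γ.vu := by linear_combination h2
      have := e1.trans e2.symm
      exact mul_right_cancel₀ hd.ne' this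
    exact (G_strictMono Γ).injective hGr
  have hAfin : (A1 ∪ A2).Finite := hA1fin.union hA2fin
  refine (Set.Finite.pi fun _ : GrpI => hAfin).subset ?_
  rintro c ⟨d, heq, hne⟩ i _
  obtain ⟨hdpol, hbr, hopt⟩ := heq
  by_cases hZ : ∃ x, Γ.muRE c i x * (Γ.fRE c i x * Γ.vq - (1 - Γ.fRE c i x) * Γ.vu) = 0
  · right
    obtain ⟨x, hWx⟩ := hZ
    refine Set.mem_iUnion.mpr ⟨i, Set.mem_iUnion.mpr ⟨x, ?_⟩⟩
    have hmu := muRE_pos Γ c i x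
    have hf0 : Γ.fRE c i x * Γ.vq - (1 - Γ.fRE c i x) * Γ.vu = 0 := by
      rcases mul_eq_zero.mp hWx with h | h
      · exact absurd h hmu.ne'
      · exact h
    have hden := fden_pos Γ c i x
    have hfRE : Γ.fRE c i x = Γ.G (c i) * Γ.p i x Cls.q /
        (Γ.G (c i) * Γ.p i x Cls.q + (1 - Γ.G (c i)) * Γ.p i x Cls.u) := rfl
    rw [hfRE] at hf0
    show Γ.G (c i) * (Γ.p i x Cls.q * Γ.vq) = (1 - Γ.G (c i)) * (Γ.p i x Cls.u * Γ.vu)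
    field_simp at hf0
    linear_combination hf0
  · left
    push_neg at hZ
    have hpin : ∀ x, d i x = if 0 < Γ.muRE c i x *
        (Γ.fRE c i x * Γ.vq - (1 - Γ.fRE c i x) * Γ.vu) then 1 else 0 :=
      fun x => firm_opt_pin Γ hdpol hopt i x (hZ x)
    have hc : c i = Γ.om * Bq Γ i (d i) := bestResponds_eq Γ hbr i
    set T := Finset.univ.filter (fun x => 0 < Γ.muRE c i x *
      (Γ.fRE c i x * Γ.vq - (1 - Γ.fRE c i x) * Γ.vu)) with hT
    refine Set.mem_range.mpr ⟨(T, i), ?_⟩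
    show Γ.om * ∑ x ∈ T, (Γ.p i x Cls.q - Γ.p i x Cls.u) = c i
    rw [hc]
    congr 1
    unfold Bq
    rw [hT, Finset.sum_filter]
    refine Finset.sum_congr rfl fun x _ => ?_
    rw [hpin x]
    by_cases hx : 0 < Γ.muRE c i x * (Γ.fRE c i x * Γ.vq - (1 - Γ.fRE c i x) * Γ.vu)
    · rw [if_pos hx, if_pos hx, mul_one]
    · rw [if_neg hx, if_neg hx, mul_zero]

lemma exists_uniform {α : Type*} {s : Set α} (hs : s.Finite) {P : α → ℝ → Prop}
    (hmono : ∀ a, ∀ ε ε' : ℝ, ε ≤ ε' → P a ε' → P a ε)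
    (h : ∀ a ∈ s, ∃ ε, 0 < ε ∧ P a ε) : ∃ ε, 0 < ε ∧ ∀ a ∈ s, P a ε := by
  classical
  choose! εf hεf using h
  refine ⟨(insert (1:ℝ) (hs.toFinset.image εf)).min' (Finset.insert_nonempty _ _), ?_, ?_⟩
  · rcases Finset.mem_insert.mp ((insert (1:ℝ) (hs.toFinset.image εf)).min'_mem
      (Finset.insert_nonempty _ _)) with h1 | h1
    · rw [h1]
      exact one_pos
    · obtain ⟨a, ha, hae⟩ := Finset.mem_image.mp h1
      rw [← hae]
      exact (hεf a (hs.mem_toFinset.mp ha)).1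
  · intro a ha
    refine hmono a _ (εf a) ?_ (hεf a ha).2
    exact Finset.min'_le _ _ (Finset.mem_insert.mpr
      (Or.inr (Finset.mem_image_of_mem εf (hs.mem_toFinset.mpr ha))))

/-- Condition (1) of non-fragility for the equal opportunity control. -/
theorem D1 {δ : ℝ} (hδ : 0 < δ) :
    ∃ ε, 0 < ε ∧ ∀ c d, Γ.IsEquilibrium c d → c GrpI.w ≠ c GrpI.b →
      ∀ μ f, FullSupp μ → OpenBelief f →
        pairDist μ f (Γ.muRE c) (Γ.fRE c) ≤ ε →
        ∀ dh ∈ Γ.Smax (fun μ' f' => EOset μ' f') μ f,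
          ∃ d' ∈ Γ.Smax (fun μ' f' => EOset μ' f') (Γ.muRE c) (Γ.fRE c),
            polDist dh d' ≤ δ := by
  classical
  set P : (GrpI → ℝ) → ℝ → Prop := fun c ε =>
    ∀ μ f, FullSupp μ → OpenBelief f →
      pairDist μ f (Γ.muRE c) (Γ.fRE c) ≤ ε →
      ∀ dh ∈ Γ.Smax (fun μ' f' => EOset μ' f') μ f,
        ∃ d' ∈ Γ.Smax (fun μ' f' => EOset μ' f') (Γ.muRE c) (Γ.fRE c),
          polDist dh d' ≤ δ with hP
  have hmono : ∀ c, ∀ ε ε' : ℝ, ε ≤ ε' → P c ε' → P c ε := by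
    intro c ε ε' hle hP' μ f hμ hf hdist
    exact hP' μ f hμ hf (hdist.trans hle)
  have hpt : ∀ c ∈ CEset Γ, ∃ ε, 0 < ε ∧ P c ε := by
    intro c _
    obtain ⟨ε, hε, hprop⟩ := smax_uhc Γ ((Γ.muRE c, Γ.fRE c) : PT N Xs) (REpt_mem_SP Γ c) hδ
    refine ⟨ε, hε, ?_⟩
    intro μ f hμ hf hdist dh hdh
    have hd2 : dist ((μ, f) : PT N Xs) ((Γ.muRE c, Γ.fRE c) : PT N Xs) ≤ ε :=
      (dist_le_pairDist μ f (Γ.muRE c) (Γ.fRE c)).trans hdist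
    obtain ⟨d', hd', hlt⟩ := hprop ((μ, f) : PT N Xs) ⟨hμ, hf⟩ hd2 dh hdh
    exact ⟨d', hd', hlt.le⟩
  obtain ⟨ε, hε, hall⟩ := exists_uniform (CEset_finite Γ) hmono hpt
  refine ⟨ε, hε, ?_⟩
  intro c d heq hne
  exact hall c ⟨d, heq, hne⟩

end EOFrag
namespace EOFrag

set_option linter.unusedSectionVars false
set_option maxHeartbeats 1000000

variable {N : ℕ} {Xs : Fin N → Type} [∀ j, Fintype (Xs j)] [∀ j, Nonempty (Xs j)]
variable (Γ : Game N Xs)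

lemma cbound (c : GrpI → ℝ) (d : Pl N Xs) (hbr : Γ.BestResponds c d) (hpol : IsPolicy d)
    (i : GrpI) : |c i| ≤ |Γ.om| * (∑ i', ∑ x, (Γ.p i' x Cls.q + Γ.p i' x Cls.u)) := by
  rw [bestResponds_eq Γ hbr i, abs_mul]
  have hB : |Bq Γ i (d i)| ≤ ∑ x, (Γ.p i x Cls.q + Γ.p i x Cls.u) := by
    refine (Finset.abs_sum_le_sum_abs _ _).trans (Finset.sum_le_sum fun x _ => ?_)
    rw [abs_mul]
    have h1 : |Γ.p i x Cls.q - Γ.p i x Cls.u| ≤ Γ.p i x Cls.q + Γ.p i x Cls.u :=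
      abs_le.mpr ⟨by linarith [p_pos Γ i x Cls.q, p_pos Γ i x Cls.u],
        by linarith [p_pos Γ i x Cls.q, p_pos Γ i x Cls.u]⟩
    have h2 : |d i x| ≤ 1 := abs_le.mpr ⟨by linarith [(hpol i x).1], (hpol i x).2⟩
    calc |Γ.p i x Cls.q - Γ.p i x Cls.u| * |d i x|
        ≤ (Γ.p i x Cls.q + Γ.p i x Cls.u) * 1 := by
          refine mul_le_mul h1 h2 (abs_nonneg _) ?_
          linarith [p_pos Γ i x Cls.q, p_pos Γ i x Cls.u]
    _ = Γ.p i x Cls.q + Γ.p i x Cls.u := mul_one _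
  have hsum : (∑ x, (Γ.p i x Cls.q + Γ.p i x Cls.u))
      ≤ ∑ i', ∑ x, (Γ.p i' x Cls.q + Γ.p i' x Cls.u) :=
    Finset.single_le_sum (f := fun i' => ∑ x, (Γ.p i' x Cls.q + Γ.p i' x Cls.u))
      (fun i' _ => Finset.sum_nonneg fun x _ => by
        linarith [p_pos Γ i' x Cls.q, p_pos Γ i' x Cls.u]) (Finset.mem_univ i)
  calc |Γ.om| * |Bq Γ i (d i)| ≤ |Γ.om| * (∑ x, (Γ.p i x Cls.q + Γ.p i x Cls.u)) :=
      mul_le_mul_of_nonneg_left hB (abs_nonneg _)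
  _ ≤ _ := mul_le_mul_of_nonneg_left hsum (abs_nonneg _)

/-- Condition (2) of non-fragility for the equal opportunity control. -/
theorem D2 {δ : ℝ} (hδ : 0 < δ) :
    ∃ ε, 0 < ε ∧ ∀ c d, Γ.IsCtrlEpsEq (fun μ' f' => EOset μ' f') ε c d →
      ∃ c' d', Γ.IsControlledEq (fun μ' f' => EOset μ' f') c' d' ∧
        profDist c d c' d' ≤ δ := by
  classical
  set M : ℝ := |Γ.om| * (∑ i', ∑ x, (Γ.p i' x Cls.q + Γ.p i' x Cls.u)) with hM
  set K : Set ((GrpI → ℝ) × Pl N Xs) :=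
    (Set.univ.pi fun _ : GrpI => Set.Icc (-M) M) ×ˢ PolSet with hK
  have hKc : IsCompact K :=
    (isCompact_univ_pi fun _ => isCompact_Icc).prod isCompact_polSet
  set Gd : Set ((GrpI → ℝ) × Pl N Xs) := {p | ∃ c' d',
    Γ.IsControlledEq (fun μ' f' => EOset μ' f') c' d' ∧ profDist p.1 p.2 c' d' < δ} with hGd
  have hGdo : IsOpen Gd := by
    have hrw : Gd = ⋃ q ∈ {q : (GrpI → ℝ) × Pl N Xs |
        Γ.IsControlledEq (fun μ' f' => EOset μ' f') q.1 q.2},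
        {p : (GrpI → ℝ) × Pl N Xs | profDist p.1 p.2 q.1 q.2 < δ} := by
      ext p
      simp only [hGd, Set.mem_setOf_eq, Set.mem_iUnion]
      constructor
      · rintro ⟨c', d', h1, h2⟩
        exact ⟨(c', d'), h1, h2⟩
      · rintro ⟨q, h1, h2⟩
        exact ⟨q.1, q.2, h1, h2⟩
    rw [hrw]
    exact isOpen_biUnion fun q _ =>
      isOpen_lt (continuous_profDist_left q.1 q.2) continuous_const
  have hBadc : IsCompact (K \ Gd) := hKc.diff hGdo
  have key : ∀ p ∈ K \ Gd, ∃ U ∈ nhds p, ∃ ε, 0 < ε ∧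
      ∀ q ∈ U, ¬ Γ.IsCtrlEpsEq (fun μ' f' => EOset μ' f') ε q.1 q.2 := by
    rintro ⟨c, d⟩ ⟨hpK, hpG⟩
    have hnceq : ¬ Γ.IsControlledEq (fun μ' f' => EOset μ' f') c d := by
      intro hceq
      exact hpG ⟨c, d, hceq, by rw [profDist_self]; exact hδ⟩
    have hdpol : IsPolicy d := hpK.2
    set astar : PT N Xs := ((Γ.muRE c, Γ.fRE c) : PT N Xs) with hastar
    have hastarS : astar ∈ SP := REpt_mem_SP Γ c
    by_cases hbr : Γ.BestResponds c d
    · by_cases hdEO : d ∈ EOset (Γ.muRE c) (Γ.fRE c)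
      · -- case (c): d is dominated at the rational-expectations point
        have hdom : ∃ d₀ ∈ EOset (Γ.muRE c) (Γ.fRE c),
            Γ.UF d (Γ.muRE c) (Γ.fRE c) < Γ.UF d₀ (Γ.muRE c) (Γ.fRE c) := by
          by_contra hno
          push_neg at hno
          exact hnceq ⟨hdEO, hbr, fun d' hd' => hno d' hd'⟩
        obtain ⟨d₀, hd₀EO, hlt⟩ := hdom
        set m : ℝ := (Γ.UF d (Γ.muRE c) (Γ.fRE c) + Γ.UF d₀ (Γ.muRE c) (Γ.fRE c)) / 2 with hm
        have hm1 : Γ.UF d (Γ.muRE c) (Γ.fRE c) < m := by rw [hm]; linarith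
        have hm2 : m < Γ.UF d₀ (Γ.muRE c) (Γ.fRE c) := by rw [hm]; linarith
        have htend : Filter.Tendsto (fun a' : PT N Xs => Γ.UF (eta d₀ a') a'.1 a'.2)
            (nhdsWithin astar SP) (nhds (Γ.UF d₀ (Γ.muRE c) (Γ.fRE c))) := by
          have h1 : Filter.Tendsto (fun a' : PT N Xs => ((a', eta d₀ a') : PT N Xs × Pl N Xs))
              (nhdsWithin astar SP) (nhds (astar, d₀)) := by
            refine Filter.Tendsto.prodMk_nhds ?_ (eta_tendsto hastarS hd₀EO)
            exact Filter.tendsto_id.mono_left nhdsWithin_le_nhds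
          have h2 : Filter.Tendsto (fun q : PT N Xs × Pl N Xs => Γ.UF q.2 q.1.1 q.1.2)
              (nhds ((astar, d₀) : PT N Xs × Pl N Xs))
              (nhds (Γ.UF d₀ (Γ.muRE c) (Γ.fRE c))) := (continuous_UF Γ).tendsto _
          have h3 := h2.comp h1
          exact h3
        have hev1 : ∀ᶠ a' in nhdsWithin astar SP, m < Γ.UF (eta d₀ a') a'.1 a'.2 :=
          htend.eventually (eventually_gt_nhds hm2)
        obtain ⟨O1, hO1o, hO1a, hO1sub⟩ := mem_nhdsWithin.mp (Filter.eventually_iff.mp hev1)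
        obtain ⟨ρ1, hρ1, hball1⟩ := Metric.isOpen_iff.mp hO1o astar hO1a
        have hev2 : ∀ᶠ q : PT N Xs × Pl N Xs in nhds ((astar, d) : PT N Xs × Pl N Xs),
            Γ.UF q.2 q.1.1 q.1.2 < m :=
          ((continuous_UF Γ).continuousAt).eventually (eventually_lt_nhds hm1)
        obtain ⟨ρ2, hρ2, hprop2⟩ := Metric.eventually_nhds_iff.mp hev2
        set ρ : ℝ := min ρ1 ρ2 with hρdef
        have hρ : 0 < ρ := lt_min hρ1 hρ2
        refine ⟨{q : (GrpI → ℝ) × Pl N Xs |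
          dist ((Γ.muRE q.1, Γ.fRE q.1) : PT N Xs) astar < ρ / 2 ∧ dist q.2 d < ρ / 2}, ?_,
          ρ / 4, by linarith, ?_⟩
        · refine IsOpen.mem_nhds ?_ ?_
          · refine IsOpen.inter ?_ ?_
            · exact isOpen_lt (Continuous.dist ((continuous_REpt Γ).comp continuous_fst)
                continuous_const) continuous_const
            · exact isOpen_lt (Continuous.dist continuous_snd continuous_const) continuous_const
          · constructor
            · show dist ((Γ.muRE c, Γ.fRE c) : PT N Xs) astar < ρ / 2
              rw [hastar, dist_self]
              linarith
            · show dist d d < ρ / 2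
              rw [dist_self]
              linarith
        · rintro ⟨c₂, d₂⟩ ⟨hq1, hq2⟩ hce
          obtain ⟨μ, f, hμ, hf, hdist, hbr₂, hd₂EO, hopt₂⟩ := hce
          have ha'S : ((μ, f) : PT N Xs) ∈ SP := ⟨hμ, hf⟩
          have hd1 : dist ((μ, f) : PT N Xs) ((Γ.muRE c₂, Γ.fRE c₂) : PT N Xs) ≤ ρ / 4 :=
            (dist_le_pairDist μ f (Γ.muRE c₂) (Γ.fRE c₂)).trans hdist
          have hd2 : dist ((μ, f) : PT N Xs) astar < ρ :=
            calc dist ((μ, f) : PT N Xs) astar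
                ≤ dist ((μ, f) : PT N Xs) ((Γ.muRE c₂, Γ.fRE c₂) : PT N Xs)
                  + dist ((Γ.muRE c₂, Γ.fRE c₂) : PT N Xs) astar := dist_triangle _ _ _
            _ < ρ / 4 + ρ / 2 := add_lt_add_of_le_of_lt hd1 hq1
            _ ≤ ρ := by linarith
          have hin1 : ((μ, f) : PT N Xs) ∈ O1 := hball1 (by
            rw [Metric.mem_ball]
            exact lt_of_lt_of_le hd2 (min_le_left _ _))
          have hUFeta : m < Γ.UF (eta d₀ ((μ, f) : PT N Xs)) μ f := hO1sub ⟨hin1, ha'S⟩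
          have hqd : dist ((((μ, f) : PT N Xs), d₂) : PT N Xs × Pl N Xs)
              ((astar, d) : PT N Xs × Pl N Xs) < ρ2 := by
            rw [Prod.dist_eq]
            have h5 : ρ ≤ ρ2 := min_le_right ρ1 ρ2
            refine max_lt ?_ ?_
            · exact lt_of_lt_of_le hd2 h5
            · exact lt_of_lt_of_le hq2 (by linarith)
          have hUFd₂ : Γ.UF d₂ μ f < m := hprop2 hqd
          have heta : eta d₀ ((μ, f) : PT N Xs) ∈ EOset μ f :=
            eta_mem_EOset ha'S hd₀EO.1
          have := hopt₂ (eta d₀ ((μ, f) : PT N Xs)) heta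
          linarith
      · -- case (b): d is infeasible at the rational-expectations point
        have hne : TP GrpI.w d (Γ.muRE c) (Γ.fRE c) ≠ TP GrpI.b d (Γ.muRE c) (Γ.fRE c) := by
          intro heqTP
          exact hdEO ⟨hdpol, heqTP⟩
        have hca : ContinuousAt (fun q : PT N Xs × Pl N Xs =>
            TP GrpI.w q.2 q.1.1 q.1.2 - TP GrpI.b q.2 q.1.1 q.1.2)
            ((astar, d) : PT N Xs × Pl N Xs) :=
          (continuousAt_TP GrpI.w (astar, d) (den_pos hastarS.1 hastarS.2 GrpI.w).ne').sub
            (continuousAt_TP GrpI.b (astar, d) (den_pos hastarS.1 hastarS.2 GrpI.b).ne')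
        have hev : ∀ᶠ q : PT N Xs × Pl N Xs in nhds ((astar, d) : PT N Xs × Pl N Xs),
            TP GrpI.w q.2 q.1.1 q.1.2 - TP GrpI.b q.2 q.1.1 q.1.2 ≠ 0 :=
          hca.eventually_ne (sub_ne_zero.mpr hne)
        obtain ⟨ρ2, hρ2, hprop2⟩ := Metric.eventually_nhds_iff.mp hev
        refine ⟨{q : (GrpI → ℝ) × Pl N Xs |
          dist ((Γ.muRE q.1, Γ.fRE q.1) : PT N Xs) astar < ρ2 / 2 ∧ dist q.2 d < ρ2 / 2}, ?_,
          ρ2 / 4, by linarith, ?_⟩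
        · refine IsOpen.mem_nhds ?_ ?_
          · refine IsOpen.inter ?_ ?_
            · exact isOpen_lt (Continuous.dist ((continuous_REpt Γ).comp continuous_fst)
                continuous_const) continuous_const
            · exact isOpen_lt (Continuous.dist continuous_snd continuous_const) continuous_const
          · constructor
            · show dist ((Γ.muRE c, Γ.fRE c) : PT N Xs) astar < ρ2 / 2
              rw [hastar, dist_self]
              linarith
            · show dist d d < ρ2 / 2
              rw [dist_self]
              linarith
        · rintro ⟨c₂, d₂⟩ ⟨hq1, hq2⟩ hce
          obtain ⟨μ, f, hμ, hf, hdist, hbr₂, hd₂EO, hopt₂⟩ := hce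
          have hd1 : dist ((μ, f) : PT N Xs) ((Γ.muRE c₂, Γ.fRE c₂) : PT N Xs) ≤ ρ2 / 4 :=
            (dist_le_pairDist μ f (Γ.muRE c₂) (Γ.fRE c₂)).trans hdist
          have hd2 : dist ((μ, f) : PT N Xs) astar < ρ2 :=
            calc dist ((μ, f) : PT N Xs) astar
                ≤ dist ((μ, f) : PT N Xs) ((Γ.muRE c₂, Γ.fRE c₂) : PT N Xs)
                  + dist ((Γ.muRE c₂, Γ.fRE c₂) : PT N Xs) astar := dist_triangle _ _ _
            _ < ρ2 / 4 + ρ2 / 2 := add_lt_add_of_le_of_lt hd1 hq1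
            _ ≤ ρ2 := by linarith
          have hqd : dist ((((μ, f) : PT N Xs), d₂) : PT N Xs × Pl N Xs)
              ((astar, d) : PT N Xs × Pl N Xs) < ρ2 := by
            rw [Prod.dist_eq]
            exact max_lt hd2 (by linarith)
          exact hprop2 hqd (sub_eq_zero_of_eq hd₂EO.2)
    · -- case (a): the best-response condition fails near (c, d)
      unfold Game.BestResponds at hbr
      push_neg at hbr
      obtain ⟨i, c', hgt⟩ := hbr
      have hcont : Continuous fun q : (GrpI → ℝ) × Pl N Xs =>
          Γ.Uapp i c' (q.2 i) - Γ.Uapp i (q.1 i) (q.2 i) := by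
        have hsnd : Continuous fun q : (GrpI → ℝ) × Pl N Xs => q.2 i :=
          (continuous_apply i).comp continuous_snd
        have hfst : Continuous fun q : (GrpI → ℝ) × Pl N Xs => q.1 i :=
          (continuous_apply i).comp continuous_fst
        have h1 : Continuous fun q : (GrpI → ℝ) × Pl N Xs => Γ.Uapp i c' (q.2 i) := by
          have hpair : Continuous fun q : (GrpI → ℝ) × Pl N Xs =>
              ((c', q.2 i) : ℝ × (((j : Fin N) → Xs j) → ℝ)) := continuous_const.prodMk hsnd
          have h := (continuous_Uapp Γ i).comp hpair
          exact h
        have h2 : Continuous fun q : (GrpI → ℝ) × Pl N Xs => Γ.Uapp i (q.1 i) (q.2 i) := by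
          have hpair : Continuous fun q : (GrpI → ℝ) × Pl N Xs =>
              ((q.1 i, q.2 i) : ℝ × (((j : Fin N) → Xs j) → ℝ)) := hfst.prodMk hsnd
          have h := (continuous_Uapp Γ i).comp hpair
          exact h
        exact h1.sub h2
      have hval : (0:ℝ) < Γ.Uapp i c' (d i) - Γ.Uapp i (c i) (d i) := by linarith
      have hev : ∀ᶠ q : (GrpI → ℝ) × Pl N Xs in nhds (c, d),
          0 < Γ.Uapp i c' (q.2 i) - Γ.Uapp i (q.1 i) (q.2 i) :=
        hcont.continuousAt.eventually (eventually_gt_nhds hval)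
      refine ⟨{q : (GrpI → ℝ) × Pl N Xs |
        0 < Γ.Uapp i c' (q.2 i) - Γ.Uapp i (q.1 i) (q.2 i)}, Filter.eventually_iff.mp hev,
        1, one_pos, ?_⟩
      rintro ⟨c₂, d₂⟩ hq hce
      obtain ⟨μ, f, hμ, hf, hdist, hbr₂, hd₂EO, hopt₂⟩ := hce
      have hle := hbr₂ i c'
      simp only [Set.mem_setOf_eq] at hq
      linarith
  choose! U hU ε hε hprop using key
  obtain ⟨t, htB, hcov⟩ := hBadc.elim_nhds_subcover U fun p hp => hU p hp
  set E : Finset ℝ := insert (1:ℝ) (t.image ε) with hE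
  have hEne : E.Nonempty := Finset.insert_nonempty _ _
  refine ⟨E.min' hEne, ?_, ?_⟩
  · rcases Finset.mem_insert.mp (E.min'_mem hEne) with h1 | h1
    · rw [h1]
      exact one_pos
    · obtain ⟨p, hp, hpe⟩ := Finset.mem_image.mp h1
      rw [← hpe]
      exact hε p (htB p hp)
  · intro c d hce
    obtain ⟨μ, f, hμ, hf, hdist, hbr, hdEO, hopt⟩ := hce
    have hdpol : IsPolicy d := hdEO.1
    have hcK : ((c, d) : (GrpI → ℝ) × Pl N Xs) ∈ K := by
      constructor
      · intro i _
        exact abs_le.mp (cbound Γ c d hbr hdpol i)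
      · exact hdpol
    by_cases hG : ((c, d) : (GrpI → ℝ) × Pl N Xs) ∈ Gd
    · obtain ⟨c', d', hc'd', hltδ⟩ := hG
      exact ⟨c', d', hc'd', hltδ.le⟩
    · exfalso
      have hmem := hcov ⟨hcK, hG⟩
      simp only [Set.mem_iUnion] at hmem
      obtain ⟨p, hpt2, hmemU⟩ := hmem
      refine hprop p (htB p hpt2) (c, d) hmemU ?_
      refine ⟨μ, f, hμ, hf, ?_, hbr, hdEO, hopt⟩
      refine hdist.trans (Finset.min'_le _ _ ?_)
      exact Finset.mem_insert.mpr (Or.inr (Finset.mem_image_of_mem ε hpt2))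

end EOFrag
/-- The equal opportunity control is continuous -- nonempty- and
compact-valued, upper hemicontinuous and lower hemicontinuous on
`Δ°(I×X) × (0,1)^{I×X}` -- and consequently it is not fragile. -/
theorem equal_opportunity_continuous_and_not_fragile
    {N : ℕ} {Xs : Fin N → Type} [∀ j, Fintype (Xs j)] [∀ j, Nonempty (Xs j)] :
    (∀ μ f : GrpI → ((j : Fin N) → Xs j) → ℝ, FullSupp μ → OpenBelief f →
      (EOset μ f).Nonempty ∧ IsCompact (EOset μ f)) ∧
    UpperHemicontinuousOn' (fun pf => EOset pf.1 pf.2)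
      {pf : (GrpI → ((j : Fin N) → Xs j) → ℝ) × (GrpI → ((j : Fin N) → Xs j) → ℝ) |
        FullSupp pf.1 ∧ OpenBelief pf.2} ∧
    LowerHemicontinuousOn' (fun pf => EOset pf.1 pf.2)
      {pf : (GrpI → ((j : Fin N) → Xs j) → ℝ) × (GrpI → ((j : Fin N) → Xs j) → ℝ) |
        FullSupp pf.1 ∧ OpenBelief pf.2} ∧
    (∀ Γ : Game N Xs, Γ.OneNotLV → ∀ δ : ℝ, 0 < δ →
      ∃ ε : ℝ, 0 < ε ∧
        (∀ c d, Γ.IsEquilibrium c d → c GrpI.w ≠ c GrpI.b →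
          ∀ μ f, FullSupp μ → OpenBelief f →
            pairDist μ f (Γ.muRE c) (Γ.fRE c) ≤ ε →
            ∀ dh ∈ Γ.Smax (fun μ' f' => EOset μ' f') μ f,
              ∃ d' ∈ Γ.Smax (fun μ' f' => EOset μ' f') (Γ.muRE c) (Γ.fRE c),
                polDist dh d' ≤ δ) ∧
        (∀ c d, Γ.IsCtrlEpsEq (fun μ' f' => EOset μ' f') ε c d →
          ∃ c' d', Γ.IsControlledEq (fun μ' f' => EOset μ' f') c' d' ∧
            profDist c d c' d' ≤ δ)) := by
  refine ⟨?_, ?_, ?_, ?_⟩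
  · intro μ f hμ hf
    exact ⟨⟨fun _ _ => 1, EOFrag.one_mem_EOset hμ hf⟩, EOFrag.isCompact_EOset μ f⟩
  · exact EOFrag.uhc_EOset
  · exact EOFrag.lhc_EOset
  · intro Γ _ δ hδ
    obtain ⟨ε1, hε1, h1⟩ := EOFrag.D1 Γ hδ
    obtain ⟨ε2, hε2, h2⟩ := EOFrag.D2 Γ hδ
    refine ⟨min ε1 ε2, lt_min hε1 hε2, ?_, ?_⟩
    · intro c d heq hne μ f hμ hf hdist
      exact h1 c d heq hne μ f hμ hf (hdist.trans (min_le_left _ _))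
    · intro c d hce
      refine h2 c d ?_
      obtain ⟨μ, f, hμ, hf, hdist, hbr, hdEO, hopt⟩ := hce
      exact ⟨μ, f, hμ, hf, hdist.trans (min_le_right _ _), hbr, hdEO, hopt⟩
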